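/- arXiv:2305.08269 — 7 statements merged into one kernel-verified Lean document; each statement's English description precedes it below -/
import Mathlib

section
/- Let G = (V, E) be a connected undirected simple graph, let W = (w_1, …, w_s) be a walk in G, and let f : V → ℝ be valid for W. Then the last vertex w_s of the walk is a local minimum of f, and it is the unique local minimum of f: every vertex v ≠ w_s has a neighbor u with f(u) < f(v). -/
/-- The 1-based index of the last occurrence of `v` on the list `W`, i.e.
`max {i ∈ [s] : w_i = v}` when `v` appears on `W` (where `s = W.length`). -/
def lastIdx {α : Type*} [DecidableEq α] (W : List α) (v : α) : ℕ :=
  W.length - W.reverse.idxOf v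

lemma getElem_congr'' {α : Type*} (l : List α) {i k : ℕ} (h : i < l.length) (e : i = k) :
    l[i] = l[k]'(e ▸ h) := by subst e; rfl

lemma indexOf_le_of_getElem {α : Type*} [DecidableEq α] :
    ∀ (l : List α) (i : ℕ) (h : i < l.length), l.idxOf l[i] ≤ i
  | a :: l, 0, _ => by simp
  | a :: l, i + 1, h => by
    rw [List.getElem_cons_succ]
    rcases eq_or_ne a (l[i]'(by simpa using h)) with he | hne
    · rw [List.idxOf_cons_eq _ he]; omega
    · rw [List.idxOf_cons_ne _ hne]
      have := indexOf_le_of_getElem l i (by simpa using h)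
      omega

/-- Let `G` be a connected undirected simple graph, `W = (w_1, …, w_s)` a
walk in `G`, and `f : V → ℝ` valid for `W`.  Then the last vertex `w_s` of the walk is a
local minimum of `f`, and it is the unique local minimum: every vertex `v ≠ w_s` has a
neighbour `u` with `f u < f v`. -/
theorem stmt0 {n : ℕ} (G : SimpleGraph (Fin n)) (hconn : G.Connected)
    (W : List (Fin n)) (hW : W ≠ []) (hwalk : W.Chain' G.Adj)
    (f : Fin n → ℝ)
    (hvalid1 : ∀ u ∈ W, ∀ v ∈ W, lastIdx W v < lastIdx W u → f u < f v)
    (hvalid2 : ∀ v, v ∉ W → f v = (G.dist (W.head hW) v : ℝ) ∧ 0 < f v)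
    (hvalid3 : ∀ w ∈ W, f w ≤ 0) :
    (∀ u, G.Adj (W.getLast hW) u → f (W.getLast hW) ≤ f u) ∧
      (∀ v, v ≠ W.getLast hW → ∃ u, G.Adj v u ∧ f u < f v) := by
  set t := W.getLast hW with ht
  set s := W.length with hs
  have hR : W.reverse ≠ [] := by simpa using hW
  have hs0 : 0 < s := List.length_pos_iff.mpr hW
  have htmem : t ∈ W := List.getLast_mem hW
  have hRhead : W.reverse.head hR = t := List.head_reverse hR
  have hidxt : W.reverse.idxOf t = 0 := by
    conv_lhs => rw [← List.cons_head_tail hR, hRhead]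
    exact List.idxOf_cons_self
  have hlast_t : lastIdx W t = s := by
    simp [lastIdx, hidxt, hs]
  -- last index of a vertex u ∈ W with u ≠ t is < s
  have hlt : ∀ u ∈ W, u ≠ t → lastIdx W u < s := by
    intro u hu hune
    have hmemR : u ∈ W.reverse := by simpa using hu
    have hidx : W.reverse.idxOf u ≠ 0 := by
      intro h0
      apply hune
      have h1 := List.getElem_idxOf (x := u) (xs := W.reverse)
        (List.idxOf_lt_length_iff.mpr hmemR)
      rw [getElem_congr'' _ _ h0, List.getElem_zero, hRhead] at h1
      exact h1.symm
    have hidxlt : W.reverse.idxOf u < s := by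
      simpa [hs] using List.idxOf_lt_length_iff.mpr hmemR
    unfold lastIdx
    omega
  constructor
  · intro u hadj
    rcases em (u ∈ W) with hu | hu
    · rcases eq_or_ne u t with rfl | hune
      · exact le_refl _
      · exact le_of_lt (hvalid1 t htmem u hu (by rw [hlast_t]; exact hlt u hu hune))
    · have h2 := hvalid2 u hu
      exact le_of_lt (lt_of_le_of_lt (hvalid3 t htmem) h2.2)
  · intro v hv
    rcases em (v ∈ W) with hvm | hvm
    · -- v on the walk, not the last vertex: take the next vertex after its last occurrence
      have hmemR : v ∈ W.reverse := by simpa using hvm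
      set j := W.reverse.idxOf v with hj
      have hjlt : j < s := by simpa [hs] using List.idxOf_lt_length_iff.mpr hmemR
      have hj0 : 0 < j := by
        rcases Nat.eq_zero_or_pos j with h0 | h
        · exfalso
          apply hv
          have h1 := List.getElem_idxOf (x := v) (xs := W.reverse)
            (List.idxOf_lt_length_iff.mpr hmemR)
          rw [getElem_congr'' _ _ (hj ▸ h0 : List.idxOf v W.reverse = 0),
            List.getElem_zero, hRhead] at h1
          exact h1.symm
        · exact h
      have hRlen : W.reverse.length = s := by
        rw [List.length_reverse]
      have hjR : j < W.reverse.length := by omega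
      have hgetv : W.reverse[j]'hjR = v :=
        List.getElem_idxOf (by rw [hRlen]; omega)
      have hjR' : j - 1 < W.reverse.length := by omega
      have hchainR : W.reverse.Chain' (flip G.Adj) := List.isChain_reverse.mpr hwalk
      have hadj0 := List.isChain_iff_getElem.mp hchainR (j-1) (by omega)
      rw [getElem_congr'' _ _ (show j - 1 + 1 = j by omega), hgetv] at hadj0
      refine ⟨W.reverse[j-1]'hjR', hadj0, ?_⟩
      have humem : W.reverse[j-1]'hjR' ∈ W := by
        rw [← List.mem_reverse]
        exact List.getElem_mem _
      apply hvalid1 _ humem v hvm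
      have hidxu : W.reverse.idxOf (W.reverse[j-1]'hjR') ≤ j - 1 :=
        indexOf_le_of_getElem W.reverse (j-1) hjR'
      unfold lastIdx
      rw [← hj]
      omega
    · -- v off the walk
      set w1 := W.head hW with hw1
      have hw1mem : w1 ∈ W := List.head_mem hW
      obtain ⟨hfv, hfvpos⟩ := hvalid2 v hvm
      set d := G.dist w1 v with hd
      have hd0 : 0 < d := by
        by_contra h
        have : d = 0 := by omega
        rw [hfv, this] at hfvpos
        simp at hfvpos
      obtain ⟨p, hp⟩ := hconn.exists_walk_length_eq_dist w1 v
      have hne : v ≠ w1 := by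
        intro h
        rw [h] at hd
        rw [SimpleGraph.dist_self] at hd
        omega
      obtain ⟨u', hadj, q, hq⟩ := SimpleGraph.Walk.exists_eq_cons_of_ne hne p.reverse
      have hqlen : q.length = d - 1 := by
        have := congrArg SimpleGraph.Walk.length hq
        simp [hp, ← hd] at this
        omega
      have hdistu : G.dist w1 u' ≤ d - 1 := by
        rw [← hqlen]
        have := SimpleGraph.dist_le q.reverse
        simpa [SimpleGraph.dist_comm] using this
      refine ⟨u', hadj, ?_⟩
      rcases em (u' ∈ W) with hu' | hu'
      · calc f u' ≤ 0 := hvalid3 u' hu'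
          _ < f v := hfvpos
      · obtain ⟨hfu, _⟩ := hvalid2 u' hu'
        rw [hfu, hfv]
        exact_mod_cast by omega
end

section
/- For every sequence x ∈ {1} × [n]^L, the function f_x is valid for the staircase S_x; consequently f_x has a unique local minimum, located at the last vertex of S_x. -/
open Finset
open Fin.NatCast

variable {n L : ℕ}

/-- The segment of the staircase between milestones `x i` and `x (i+1)` (`0`-based `i`),
namely the path `P^{x_i, x_{i+1}}` of the all-pairs set of paths `P`. -/
def seg (P : Fin n → Fin n → List (Fin n)) (x : Fin (L + 1) → Fin n) (i : ℕ) :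
    List (Fin n) :=
  P (x i) (x (i + 1))

/-- The staircase `S_x` induced by the milestone sequence `x` and the all-pairs set of
paths `P`: the concatenation `P^{x_1,x_2} ∘ P^{x_2,x_3} ∘ ⋯ ∘ P^{x_L,x_{L+1}}` (as a walk;
each path after the first contributes everything but its first vertex). -/
def staircase (P : Fin n → Fin n → List (Fin n)) (x : Fin (L + 1) → Fin n) :
    List (Fin n) :=
  x 0 :: ((List.range L).flatMap fun i => (seg P x i).tail)

/-- The largest (`0`-based) segment index whose path contains `v`. -/
def segIdx (P : Fin n → Fin n → List (Fin n)) (x : Fin (L + 1) → Fin n) (v : Fin n) : ℕ :=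
  ((Finset.range L).filter fun i => v ∈ seg P x i).sup id

/-- The value function `f_x`: `f_x v = dist(v, 1)` if `v` is not on the staircase `S_x`,
and `f_x v = −(i·n + j)` if `v` is on `S_x`, where `i` is the maximum (1-based) index with
`v ∈ P^{x_i,x_{i+1}}` and `v` is the `j`-th vertex of `P^{x_i,x_{i+1}}`. -/
noncomputable def fx (G : SimpleGraph (Fin n)) (P : Fin n → Fin n → List (Fin n))
    (v₁ : Fin n) (x : Fin (L + 1) → Fin n) (v : Fin n) : ℤ :=
  if v ∈ staircase P x then
    -(((segIdx P x v : ℤ) + 1) * (n : ℤ) + (((seg P x (segIdx P x v)).idxOf v : ℤ) + 1))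
  else (G.dist v v₁ : ℤ)

/-- The function `g_{x,b}`, hiding the bit `b` at the last milestone `x_{L+1}` (second
component `b ∈ {0,1}` there, `−1` elsewhere). -/
noncomputable def gx (G : SimpleGraph (Fin n)) (P : Fin n → Fin n → List (Fin n))
    (v₁ : Fin n) (x : Fin (L + 1) → Fin n) (b : Bool) (v : Fin n) : ℤ × ℤ :=
  (fx G P v₁ x v, if v = x (Fin.last L) then (if b then 1 else 0) else -1)

/-- The maximum (1-based) index `j` such that `(x_1, …, x_j) = (y_1, …, y_j)`. -/
def maxPrefix (x y : Fin (L + 1) → Fin n) : ℕ :=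
  ((Finset.Icc 1 (L + 1)).filter fun j => ∀ i : Fin (L + 1), (i : ℕ) < j → x i = y i).sup id

/-- The relation `r`: zero if the bits agree or either sequence is not good (injective),
and `n ^ maxPrefix` otherwise. -/
noncomputable def rrel (p q : (Fin (L + 1) → Fin n) × Bool) : ℝ :=
  if p.2 = q.2 ∨ ¬ Function.Injective p.1 ∨ ¬ Function.Injective q.1 then 0
  else (n : ℝ) ^ maxPrefix p.1 q.1

/-- The relation `r_v`: equal to `r` if `g_{x,b₁}(v) ≠ g_{y,b₂}(v)` and `0` otherwise. -/
noncomputable def rv (G : SimpleGraph (Fin n)) (P : Fin n → Fin n → List (Fin n))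
    (v₁ v : Fin n) (p q : (Fin (L + 1) → Fin n) × Bool) : ℝ :=
  if gx G P v₁ p.1 p.2 v ≠ gx G P v₁ q.1 q.2 v then rrel p q else 0

/-- The relation `r̃_v`: equal to `r_v` if `μ(S_x, v) ≤ μ(S_y, v)` and `0` otherwise. -/
noncomputable def rvt (G : SimpleGraph (Fin n)) (P : Fin n → Fin n → List (Fin n))
    (v₁ v : Fin n) (p q : (Fin (L + 1) → Fin n) × Bool) : ℝ :=
  if (staircase P p.1).count v ≤ (staircase P q.1).count v then rv G P v₁ v p q else 0

/-- `Tail(j, S_x)` for a 1-based index `j ∈ [L]`: the walk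
`P^{x_j,x_{j+1}} ∘ ⋯ ∘ P^{x_L,x_{L+1}}` with the first occurrence of `x_j` removed.
For `j = L + 1` it is the empty sequence. -/
def tailWalk (P : Fin n → Fin n → List (Fin n)) (x : Fin (L + 1) → Fin n) (j : ℕ) :
    List (Fin n) :=
  if j ≤ L then
    (seg P x (j - 1) ++ ((List.range L).drop j).flatMap fun i => (seg P x i).tail).erase
      (x (j - 1))
  else []

/-- The vertex congestion of the all-pairs set of paths `P`:
`max_{w} Σ_{u,v} (number of occurrences of w on P^{u,v})`. -/
def congestion (P : Fin n → Fin n → List (Fin n)) : ℕ :=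
  Finset.univ.sup fun w => ∑ u : Fin n, ∑ v : Fin n, (P u v).count w

/-- `N_v(u)`: the number of paths in `P` that start at `u` and contain `v`. -/
def Npaths (P : Fin n → Fin n → List (Fin n)) (v u : Fin n) : ℕ :=
  (Finset.univ.filter fun w => v ∈ P u w).card

variable {α : Type*} [DecidableEq α]

lemma lastIdx_eq (A B : List α) (v : α) (h : v ∉ B) :
    lastIdx (A ++ v :: B) v = A.length + 1 := by
  have hrev : (A ++ v :: B).reverse = B.reverse ++ v :: A.reverse := by simp
  have hidx : (A ++ v :: B).reverse.idxOf v = B.length := by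
    rw [hrev, List.idxOf_append_of_notMem (by simpa using h)]
    simp
  rw [lastIdx, hidx]
  simp; omega

lemma exists_last_decomp {W : List α} {v : α} (h : v ∈ W) :
    ∃ A B, W = A ++ v :: B ∧ v ∉ B := by
  induction W with
  | nil => simp at h
  | cons a W ih =>
    by_cases hv : v ∈ W
    · obtain ⟨A, B, rfl, hB⟩ := ih hv
      exact ⟨a :: A, B, rfl, hB⟩
    · have : v = a := by rcases List.mem_cons.mp h with h | h; exact h; exact absurd h hv
      exact ⟨[], W, by simp [this], hv⟩

lemma lastIdx_getLast (W : List α) (h : W ≠ []) :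
    lastIdx W (W.getLast h) = W.length := by
  have h0 : W.reverse.idxOf (W.getLast h) = 0 := by
    have hh : W.reverse.head? = some (W.getLast h) := by
      rw [List.head?_reverse, List.getLast?_eq_getLast h]
    cases hr : W.reverse with
    | nil => simp [hr] at hh
    | cons b t =>
      rw [hr] at hh
      simp at hh
      simp [hh, List.idxOf_cons_self]
  simp [lastIdx, h0]

lemma lastIdx_le_length (W : List α) (v : α) : lastIdx W v ≤ W.length := by
  simp [lastIdx]
open Finset
variable {n L : ℕ}


section
variable (P : Fin n → Fin n → List (Fin n)) (x : Fin (L + 1) → Fin n)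
  (hhead : ∀ u v, (P u v).head? = some u)
  (hlast : ∀ u v, (P u v).getLast? = some v)

def prefixW (i : ℕ) : List (Fin n) :=
  x 0 :: ((List.range i).flatMap fun k => (seg P x k).tail)

include hhead in
lemma seg_cons (i : ℕ) : seg P x i = x i :: (seg P x i).tail := by
  have := hhead (x i) (x (i + 1))
  cases h : seg P x i with
  | nil => rw [seg] at h; rw [h] at this; simp at this
  | cons a t =>
    rw [seg] at h; rw [h] at this; simp at this
    simp [seg, h, this]

include hhead hlast in
lemma seg_getLast? (i : ℕ) : (seg P x i).getLast? = some (x (i + 1)) := hlast _ _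

lemma prefixW_succ (i : ℕ) :
    prefixW P x (i + 1) = prefixW P x i ++ (seg P x i).tail := by
  simp [prefixW, List.range_succ]

lemma staircase_eq_prefixW : staircase P x = prefixW P x L := rfl

lemma length_prefixW (i : ℕ) :
    (prefixW P x i).length = 1 + ∑ k ∈ Finset.range i, (seg P x k).tail.length := by
  induction i with
  | zero => simp [prefixW]
  | succ i ih =>
    rw [prefixW_succ, List.length_append, ih, Finset.sum_range_succ]
    ring

include hhead hlast in
lemma seg_concat (i : ℕ) (ht : (seg P x i).tail ≠ []) :
    ∃ T, (seg P x i).tail = T ++ [x ↑(i + 1)] := by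
  have hcast : ((↑(i+1) : Fin (L + 1))) = ↑i + 1 := Nat.cast_add_one i
  rw [hcast]
  obtain h | ⟨T, w, hTw⟩ := List.eq_nil_or_concat' ((seg P x i).tail)
  · exact absurd h ht
  have h2 : (seg P x i).getLast? = some w := by
    rw [seg_cons P x hhead i, hTw, ← List.cons_append, List.getLast?_concat]
  rw [seg_getLast? P x hhead hlast i] at h2
  exact ⟨T, by rw [hTw, Option.some_inj.mp h2]⟩

include hhead hlast in
lemma lastIdx_prefixW (i : ℕ) (R : List (Fin n)) (hR : x ↑i ∉ R) :
    lastIdx (prefixW P x i ++ R) (x ↑i) =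
      1 + ∑ k ∈ Finset.range i, (seg P x k).tail.length := by
  induction i generalizing R with
  | zero =>
    have hc : ((↑(0:ℕ)) : Fin (L + 1)) = 0 := by simp
    have h1 : prefixW P x 0 ++ R = [] ++ x ↑(0:ℕ) :: R := by simp [prefixW, hc]
    rw [h1, lastIdx_eq _ _ _ hR]
    simp
  | succ i ih =>
    by_cases ht : (seg P x i).tail = []
    · have hseg : seg P x i = [x ↑i] := by rw [seg_cons P x hhead i, ht]
      have hxx : x ↑(i+1) = x ↑i := by
        have := seg_getLast? P x hhead hlast i
        rw [hseg] at this; simp at this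
        rw [Nat.cast_add_one]; exact this.symm
      rw [prefixW_succ, ht, List.append_nil, Finset.sum_range_succ, ht, hxx]
      simpa using ih R (by rwa [hxx] at hR)
    · obtain ⟨T, hT⟩ := seg_concat P x hhead hlast i ht
      have h1 : prefixW P x (i+1) ++ R = (prefixW P x i ++ T) ++ x ↑(i+1) :: R := by
        rw [prefixW_succ, hT, Nat.cast_add_one]; simp
      rw [h1, lastIdx_eq _ _ _ hR, List.length_append, length_prefixW,
        Finset.sum_range_succ]
      have hlen : (seg P x i).tail.length = T.length + 1 := by rw [hT]; simp
      omega

include hhead hlast in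
lemma mem_staircase_of_mem_seg {v : Fin n} :
    ∀ i, i < L → v ∈ seg P x i → v ∈ staircase P x := by
  intro i
  induction i with
  | zero =>
    intro h0 hv
    rw [seg_cons P x hhead 0] at hv
    rcases List.mem_cons.mp hv with h | h
    · simp [staircase, h]
    · exact List.mem_cons_of_mem _
        (List.mem_flatMap.mpr ⟨0, by simp [List.mem_range, h0], h⟩)
  | succ i ih =>
    intro hL hv
    rw [seg_cons P x hhead (i + 1)] at hv
    rcases List.mem_cons.mp hv with h | h
    · apply ih (by omega)
      have hmem : x (↑i + 1) ∈ seg P x i :=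
        List.mem_of_getLast? (seg_getLast? P x hhead hlast i)
      rwa [h, Nat.cast_add_one]
    · exact List.mem_cons_of_mem _
        (List.mem_flatMap.mpr ⟨i + 1, by simp [List.mem_range, hL], h⟩)

include hhead hlast in
lemma mem_staircase_iff (hL : 0 < L) {v : Fin n} :
    v ∈ staircase P x ↔ ∃ i, i < L ∧ v ∈ seg P x i := by
  constructor
  · intro hv
    rcases List.mem_cons.mp hv with h | h
    · refine ⟨0, hL, ?_⟩
      rw [seg_cons P x hhead 0, h]
      simp
    · obtain ⟨i, hi, hvi⟩ := List.mem_flatMap.mp h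
      exact ⟨i, by simpa using hi, List.mem_of_mem_tail hvi⟩
  · rintro ⟨i, hi, hv⟩
    exact mem_staircase_of_mem_seg P x hhead hlast i hi hv

include hhead hlast in
lemma segIdx_spec (hL : 0 < L) {v : Fin n} (hv : v ∈ staircase P x) :
    segIdx P x v < L ∧ v ∈ seg P x (segIdx P x v) := by
  obtain ⟨i, hi, hvi⟩ := (mem_staircase_iff P x hhead hlast hL).mp hv
  have hne : (((Finset.range L).filter fun k => v ∈ seg P x k)).Nonempty :=
    ⟨i, by simp [Finset.mem_filter, Finset.mem_range, hi, hvi]⟩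
  have hmem : segIdx P x v ∈ (Finset.range L).filter fun k => v ∈ seg P x k := by
    rw [segIdx, ← Finset.sup'_eq_sup hne id, ← Finset.max'_eq_sup']
    exact Finset.max'_mem _ hne
  simpa [Finset.mem_filter, Finset.mem_range] using hmem

lemma segIdx_le {v : Fin n} {k : ℕ} (hk : k < L) (hv : v ∈ seg P x k) :
    k ≤ segIdx P x v :=
  Finset.le_sup (f := id) (by simp [Finset.mem_filter, Finset.mem_range, hk, hv])

include hhead hlast in
lemma lastIdx_staircase (hL : 0 < L) (hnodup : ∀ u w, (P u w).Nodup) {v : Fin n}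
    (hv : v ∈ staircase P x) :
    lastIdx (staircase P x) v =
      1 + (∑ k ∈ Finset.range (segIdx P x v), (seg P x k).tail.length)
        + (seg P x (segIdx P x v)).idxOf v := by
  obtain ⟨hiL, hvi⟩ := segIdx_spec P x hhead hlast hL hv
  set i := segIdx P x v with hidef
  set rest := (List.range' (i + 1) (L - (i + 1))).flatMap
    (fun k => (seg P x k).tail) with hrestdef
  have hnd : (seg P x i).Nodup := hnodup _ _
  have hndc : x ↑i ∉ (seg P x i).tail ∧ (seg P x i).tail.Nodup := by
    rw [seg_cons P x hhead i] at hnd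
    exact List.nodup_cons.mp hnd
  have hrest : v ∉ rest := by
    intro hmem
    obtain ⟨k, hk, hvk⟩ := List.mem_flatMap.mp hmem
    have hk' := List.mem_range'.mp hk
    obtain ⟨m, hm, rfl⟩ := hk'
    have h1 : i + 1 + 1 * m < L := by omega
    have := segIdx_le P x (by omega : i + 1 + 1 * m < L) (List.mem_of_mem_tail hvk)
    omega
  have hsplit : staircase P x = prefixW P x i ++ ((seg P x i).tail ++ rest) := by
    rw [staircase_eq_prefixW]
    have hr : List.range L = List.range (i + 1) ++ List.range' (i + 1) (L - (i + 1)) := by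
      have h2 := List.range'_append_1 (s := 0) (m := i + 1) (n := L - (i + 1))
      simp only [Nat.zero_add] at h2
      rw [List.range_eq_range', List.range_eq_range', h2]
      congr 1
      omega
    have : prefixW P x L = prefixW P x (i+1) ++ rest := by
      rw [prefixW, prefixW, hr, List.flatMap_append]
      simp [hrestdef, List.range_eq_range']
    rw [this, prefixW_succ, List.append_assoc]
  by_cases hvx : v = x ↑i
  · have hj : (seg P x i).idxOf v = 0 := by
      rw [seg_cons P x hhead i, hvx, List.idxOf_cons_self]
    have hnR : v ∉ (seg P x i).tail ++ rest := by
      rw [List.mem_append]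
      rintro (h | h)
      · rw [hvx] at h; exact hndc.1 h
      · exact hrest h
    rw [hj, hsplit, hvx, lastIdx_prefixW P x hhead hlast i _ (by rwa [hvx] at hnR)]
    omega
  · have hvt : v ∈ (seg P x i).tail := by
      rw [seg_cons P x hhead i] at hvi
      rcases List.mem_cons.mp hvi with h | h
      · exact absurd h hvx
      · exact h
    obtain ⟨T1, T2, hT⟩ := List.append_of_mem hvt
    have hndt := hndc.2
    rw [hT] at hndt
    have hsp := List.nodup_append.mp hndt
    have hv1 : v ∉ T1 := fun h => hsp.2.2 v h v List.mem_cons_self rfl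
    have hv2 : v ∉ T2 := (List.nodup_cons.mp hsp.2.1).1
    have hj : (seg P x i).idxOf v = T1.length + 1 := by
      rw [seg_cons P x hhead i, hT, List.idxOf_cons_ne _ (Ne.symm hvx),
        List.idxOf_append_of_notMem hv1, List.idxOf_cons_self]
    have hsp2 : staircase P x = (prefixW P x i ++ T1) ++ v :: (T2 ++ rest) := by
      rw [hsplit, hT]
      simp
    rw [hsp2, lastIdx_eq _ _ _ (by simp [hv2, hrest]),
      List.length_append, length_prefixW, hj]
    omega

include hhead in
lemma indexOf_le_tail_length {v : Fin n} {i : ℕ} (hv : v ∈ seg P x i) :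
    (seg P x i).idxOf v ≤ (seg P x i).tail.length := by
  have h1 : (seg P x i).idxOf v < (seg P x i).length := List.idxOf_lt_length_iff.mpr hv
  have h2 : (seg P x i).length = (seg P x i).tail.length + 1 := by
    conv_lhs => rw [seg_cons P x hhead i]
    rfl
  omega

lemma seg_length_le (i : ℕ) (hnodup : ∀ u w, (P u w).Nodup) :
    (seg P x i).length ≤ n := by
  simpa [seg] using List.Nodup.length_le_card (hnodup (x i) (x (i + 1)))

include hhead hlast in
lemma fx_lt_aux (hL : 0 < L) (hnodup : ∀ u w, (P u w).Nodup) {u v : Fin n}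
    (hu : u ∈ staircase P x) (hv : v ∈ staircase P x)
    (hlt : lastIdx (staircase P x) v < lastIdx (staircase P x) u) :
    (segIdx P x v + 1) * n + ((seg P x (segIdx P x v)).idxOf v + 1) <
      (segIdx P x u + 1) * n + ((seg P x (segIdx P x u)).idxOf u + 1) := by
  obtain ⟨huL, huS⟩ := segIdx_spec P x hhead hlast hL hu
  obtain ⟨hvL, hvS⟩ := segIdx_spec P x hhead hlast hL hv
  rw [lastIdx_staircase P x hhead hlast hL hnodup hu,
    lastIdx_staircase P x hhead hlast hL hnodup hv] at hlt
  have hjun : (seg P x (segIdx P x u)).idxOf u ≤ (seg P x (segIdx P x u)).tail.length :=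
    indexOf_le_tail_length P x hhead huS
  have hjvn : (seg P x (segIdx P x v)).idxOf v + 1 ≤ n := by
    have h1 : (seg P x (segIdx P x v)).idxOf v < (seg P x (segIdx P x v)).length :=
      List.idxOf_lt_length_iff.mpr hvS
    have h2 := seg_length_le P x (segIdx P x v) hnodup
    omega
  rcases lt_trichotomy (segIdx P x u) (segIdx P x v) with h | h | h
  · exfalso
    have hmono : ∑ k ∈ Finset.range (segIdx P x u + 1), (seg P x k).tail.length ≤
        ∑ k ∈ Finset.range (segIdx P x v), (seg P x k).tail.length :=
      Finset.sum_le_sum_of_subset (Finset.range_subset_range.mpr (by omega))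
    rw [Finset.sum_range_succ] at hmono
    omega
  · rw [h] at hlt ⊢
    exact Nat.add_lt_add_left (by omega) _
  · calc (segIdx P x v + 1) * n + ((seg P x (segIdx P x v)).idxOf v + 1)
        ≤ (segIdx P x v + 1) * n + n := by omega
      _ = (segIdx P x v + 2) * n := by ring
      _ ≤ (segIdx P x u + 1) * n := Nat.mul_le_mul_right n (by omega)
      _ < (segIdx P x u + 1) * n + ((seg P x (segIdx P x u)).idxOf u + 1) := by omega

include hhead hlast in
lemma chain'_staircase (G : SimpleGraph (Fin n))
    (hchain : ∀ u v, (P u v).Chain' G.Adj) :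
    (staircase P x).Chain' G.Adj := by
  suffices H : ∀ (m a : ℕ), List.Chain' G.Adj
      (x ↑a :: ((List.range' a m).flatMap fun k => (seg P x k).tail)) by
    have h0 := H L 0
    rw [staircase, List.range_eq_range']
    simpa using h0
  intro m
  induction m with
  | zero => intro a; exact List.isChain_singleton _
  | succ m ih =>
    intro a
    have hIH := ih (a + 1)
    rw [List.range'_succ, List.flatMap_cons]
    have heq : x ↑a :: ((seg P x a).tail ++
        ((List.range' (a + 1) m).flatMap fun k => (seg P x k).tail)) =
        seg P x a ++ ((List.range' (a + 1) m).flatMap fun k => (seg P x k).tail) := by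
      conv_rhs => rw [seg_cons P x hhead a]
      rw [List.cons_append]
    rw [heq]
    have hsegc : (seg P x a).Chain' G.Adj := hchain _ _
    apply List.IsChain.append hsegc hIH.tail
    intro y hy z hz
    rw [seg_getLast? P x hhead hlast a] at hy
    simp only [Option.mem_def, Option.some_inj] at hy
    subst hy
    have h3 := (List.isChain_cons.mp hIH).1 z
    rw [← Nat.cast_add_one]
    exact h3 hz
end


/-- For every sequence `x ∈ {1} × [n]^L`, the function `f_x` is valid for
the staircase `S_x`; consequently `f_x` has a unique local minimum, located at the last
vertex of `S_x`. -/
theorem stmt2 (hn : 0 < n) (hL : 0 < L)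
    (G : SimpleGraph (Fin n)) (hconn : G.Connected)
    (P : Fin n → Fin n → List (Fin n))
    (hhead : ∀ u v, (P u v).head? = some u)
    (hlast : ∀ u v, (P u v).getLast? = some v)
    (hchain : ∀ u v, (P u v).Chain' G.Adj)
    (hnodup : ∀ u v, (P u v).Nodup)
    (hself : ∀ u, P u u = [u])
    (x : Fin (L + 1) → Fin n) (hx0 : x 0 = ⟨0, hn⟩)
    (hSne : staircase P x ≠ []) :
    -- `f_x` is valid for the staircase `S_x`:
    ((∀ u ∈ staircase P x, ∀ v ∈ staircase P x,
        lastIdx (staircase P x) v < lastIdx (staircase P x) u →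
          fx G P ⟨0, hn⟩ x u < fx G P ⟨0, hn⟩ x v) ∧
      (∀ v, v ∉ staircase P x →
        fx G P ⟨0, hn⟩ x v = (G.dist ((staircase P x).head hSne) v : ℤ) ∧
          0 < fx G P ⟨0, hn⟩ x v) ∧
      (∀ w ∈ staircase P x, fx G P ⟨0, hn⟩ x w ≤ 0)) ∧
    -- consequently, `f_x` has a unique local minimum at the last vertex of `S_x`:
    ((∀ u, G.Adj ((staircase P x).getLast hSne) u →
        fx G P ⟨0, hn⟩ x ((staircase P x).getLast hSne) ≤ fx G P ⟨0, hn⟩ x u) ∧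
      (∀ v, v ≠ (staircase P x).getLast hSne →
        ∃ u, G.Adj v u ∧ fx G P ⟨0, hn⟩ x u < fx G P ⟨0, hn⟩ x v)) := by
  
  have hx0m : (⟨0, hn⟩ : Fin n) ∈ staircase P x := by
    rw [← hx0]; exact List.mem_cons_self
  have hhd : (staircase P x).head hSne = (⟨0, hn⟩ : Fin n) := by
    have h1 : (staircase P x).head? = some (x 0) := rfl
    rw [List.head?_eq_head hSne] at h1
    rw [← hx0]
    exact Option.some_inj.mp h1
  have key : ∀ u ∈ staircase P x, ∀ v ∈ staircase P x,
      lastIdx (staircase P x) v < lastIdx (staircase P x) u →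
      fx G P ⟨0, hn⟩ x u < fx G P ⟨0, hn⟩ x v := by
    intro u hu v hv hlt
    have hcmp := fx_lt_aux P x hhead hlast hL hnodup hu hv hlt
    simp only [fx]
    rw [if_pos hu, if_pos hv]
    have hc : (((segIdx P x v : ℕ) + 1) * n + ((seg P x (segIdx P x v)).idxOf v + 1) : ℤ) <
        (((segIdx P x u : ℕ) + 1) * n + ((seg P x (segIdx P x u)).idxOf u + 1) : ℤ) := by
      exact_mod_cast hcmp
    push_cast at hc
    linarith
  have hneg : ∀ w ∈ staircase P x, fx G P ⟨0, hn⟩ x w ≤ 0 := by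
    intro w hw
    simp only [fx]
    rw [if_pos hw]
    have h1 : (0:ℤ) ≤ ((segIdx P x w : ℤ) + 1) * (n:ℤ) := by positivity
    have h2 : (0:ℤ) ≤ ((seg P x (segIdx P x w)).idxOf w : ℤ) + 1 := by positivity
    linarith
  have hpos : ∀ v, v ∉ staircase P x →
      fx G P ⟨0, hn⟩ x v = (G.dist v ⟨0, hn⟩ : ℤ) ∧ 0 < fx G P ⟨0, hn⟩ x v := by
    intro v hv
    have hv0 : v ≠ (⟨0, hn⟩ : Fin n) := by rintro rfl; exact hv hx0m
    simp only [fx]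
    rw [if_neg hv]
    exact ⟨rfl, by exact_mod_cast hconn.pos_dist_of_ne hv0⟩
  have hgetLast? : (staircase P x).getLast? = some ((staircase P x).getLast hSne) :=
    List.getLast?_eq_getLast hSne
  have hglmem : (staircase P x).getLast hSne ∈ staircase P x := List.getLast_mem hSne
  have hlastIdx_gl : lastIdx (staircase P x) ((staircase P x).getLast hSne) =
      (staircase P x).length := lastIdx_getLast _ hSne
  have hltgl : ∀ u ∈ staircase P x, u ≠ (staircase P x).getLast hSne →
      lastIdx (staircase P x) u < (staircase P x).length := by
    intro u hu hne
    obtain ⟨A, B, hAB, hB⟩ := exists_last_decomp hu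
    have hBne : B ≠ [] := by
      rintro rfl
      apply hne
      have h2 : (staircase P x).getLast? = some u := by rw [hAB]; exact List.getLast?_concat
      rw [hgetLast?] at h2
      exact (Option.some_inj.mp h2).symm
    have h1 : lastIdx (staircase P x) u = A.length + 1 := by
      rw [hAB]; exact lastIdx_eq _ _ _ hB
    have h3 : (staircase P x).length = A.length + 1 + B.length := by rw [hAB]; simp; omega
    have h4 : 0 < B.length := List.length_pos_iff.mpr hBne
    omega
  refine ⟨⟨key, ?_, hneg⟩, ?_, ?_⟩
  · intro v hv
    refine ⟨?_, (hpos v hv).2⟩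
    rw [(hpos v hv).1, hhd, SimpleGraph.dist_comm]
  · intro u _
    by_cases hu : u ∈ staircase P x
    · by_cases hug : u = (staircase P x).getLast hSne
      · rw [hug]
      · exact le_of_lt (key _ hglmem u hu
          (by rw [hlastIdx_gl]; exact hltgl u hu hug))
    · have h1 := (hpos u hu).2
      have h2 := hneg _ hglmem
      linarith
  · intro v hvne
    by_cases hv : v ∈ staircase P x
    · obtain ⟨A, B, hAB, hB⟩ := exists_last_decomp hv
      have hBne : B ≠ [] := by
        rintro rfl
        apply hvne
        have h2 : (staircase P x).getLast? = some v := by rw [hAB]; exact List.getLast?_concat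
        rw [hgetLast?] at h2
        exact (Option.some_inj.mp h2).symm
      obtain ⟨b, B', rfl⟩ : ∃ b B', B = b :: B' := by
        cases B with
        | nil => exact absurd rfl hBne
        | cons b B' => exact ⟨b, B', rfl⟩
      have hch := chain'_staircase P x hhead hlast G hchain
      rw [hAB] at hch
      have hadj : G.Adj v b := (List.isChain_cons.mp (List.IsChain.right_of_append (l₁ := A) hch)).1 b rfl
      refine ⟨b, hadj, ?_⟩
      have hbmem : b ∈ staircase P x := by rw [hAB]; simp
      have h1 : lastIdx (staircase P x) v = A.length + 1 := by
        rw [hAB]; exact lastIdx_eq _ _ _ hB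
      obtain ⟨C, D, hCD, hD⟩ := exists_last_decomp (List.mem_cons_self (a := b) (l := B'))
      have h2 : lastIdx (staircase P x) b = (A ++ v :: C).length + 1 := by
        rw [hAB, hCD, show A ++ v :: (C ++ b :: D) = (A ++ v :: C) ++ b :: D by simp]
        exact lastIdx_eq _ _ _ hD
      apply key b hbmem v hv
      rw [h1, h2]
      simp
    · have hv0 : v ≠ (⟨0, hn⟩ : Fin n) := by rintro rfl; exact hv hx0m
      obtain ⟨p, hp⟩ := hconn.exists_walk_length_eq_dist v ⟨0, hn⟩
      cases p with
      | nil => exact absurd rfl hv0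
      | @cons _ w _ ha q =>
        refine ⟨w, ha, ?_⟩
        have hdq : G.dist w ⟨0, hn⟩ ≤ q.length := SimpleGraph.dist_le q
        have hlen : q.length + 1 = G.dist v ⟨0, hn⟩ := by
          rw [← hp]; simp [SimpleGraph.Walk.length_cons]
        have hfv : fx G P ⟨0, hn⟩ x v = (G.dist v ⟨0, hn⟩ : ℤ) := (hpos v hv).1
        rw [hfv]
        by_cases hw : w ∈ staircase P x
        · have h1 := hneg w hw
          have h2 : 0 < G.dist v ⟨0, hn⟩ := hconn.pos_dist_of_ne hv0
          have : (0:ℤ) < (G.dist v ⟨0, hn⟩ : ℤ) := by exact_mod_cast h2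
          linarith
        · have hfw : fx G P ⟨0, hn⟩ x w = (G.dist w ⟨0, hn⟩ : ℤ) := (hpos w hw).1
          rw [hfw]
          have : G.dist w ⟨0, hn⟩ < G.dist v ⟨0, hn⟩ := by omega
          exact_mod_cast this
end

section
/- Assume Σ_{F_3 ∈ ℬ} r(F_1, F_3) > 0 for every F_1 ∈ 𝒜, assume Σ_{F_3 ∈ 𝒜} r(F_3, F_2) > 0 for every F_2 ∈ ℬ, and assume there exists at least one triple (F_1, F_2, a) ∈ 𝒜 × ℬ × A with r(F_1, F_2) > 0 and F_1(a) ≠ F_2(a). Let v_min = max{ min{θ(F_1, a), θ(F_2, a)} : (F_1, F_2, a) ∈ 𝒜 × ℬ × A, r(F_1, F_2) > 0, F_1(a) ≠ F_2(a) }. Then v_min > 0, and for every 𝒵 ⊆ 𝒳 with q(𝒵) > 0 one has M(𝒵) ≥ q(𝒵)/(2·v_min). -/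
/-- (Our variant is at least as strong as the relational adversary.)
Let `𝒜, ℬ` be disjoint finite sets of functions `A → B`, let `r` be the symmetric
extension to `𝒳 = 𝒜 ∪ ℬ` of a nonnegative relation (vanishing on pairs from the same
side).  Assume all the denominators of `θ` are positive and that there is a triple
`(F₁, F₂, a) ∈ 𝒜 × ℬ × A` with `r(F₁,F₂) > 0` and `F₁ a ≠ F₂ a`.  Let
`v_min = max { min(θ(F₁,a), θ(F₂,a)) : r(F₁,F₂) > 0, F₁ a ≠ F₂ a }`.  Then `v_min > 0`,
and for every `𝒵 ⊆ 𝒳` with `q(𝒵) > 0` one has `M(𝒵) ≥ q(𝒵)/(2·v_min)`. -/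
theorem stmt5 {A B : Type*} [Fintype A] [Nonempty A] [DecidableEq B]
    (𝒜 ℬ : Finset (A → B)) (hdisj : Disjoint 𝒜 ℬ)
    (r : (A → B) → (A → B) → ℝ)
    (hsymm : ∀ F₁ F₂, r F₁ F₂ = r F₂ F₁)
    (hnonneg : ∀ F₁ F₂, 0 ≤ r F₁ F₂)
    (hzero : ∀ F₁ F₂, ((F₁ ∈ 𝒜 ∧ F₂ ∈ 𝒜) ∨ (F₁ ∈ ℬ ∧ F₂ ∈ ℬ)) → r F₁ F₂ = 0)
    (hdenA : ∀ F₁ ∈ 𝒜, 0 < ∑ F₃ ∈ ℬ, r F₁ F₃)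
    (hdenB : ∀ F₂ ∈ ℬ, 0 < ∑ F₃ ∈ 𝒜, r F₃ F₂)
    (hex : ∃ F₁ ∈ 𝒜, ∃ F₂ ∈ ℬ, ∃ a : A, 0 < r F₁ F₂ ∧ F₁ a ≠ F₂ a)
    (vmin : ℝ)
    (hvmin : IsGreatest {w : ℝ | ∃ F₁ ∈ 𝒜, ∃ F₂ ∈ ℬ, ∃ a : A,
        0 < r F₁ F₂ ∧ F₁ a ≠ F₂ a ∧
        w = min
          ((∑ F₃ ∈ ℬ.filter (fun F₃ => F₁ a ≠ F₃ a), r F₁ F₃) / ∑ F₃ ∈ ℬ, r F₁ F₃)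
          ((∑ F₃ ∈ 𝒜.filter (fun F₃ => F₂ a ≠ F₃ a), r F₃ F₂) / ∑ F₃ ∈ 𝒜, r F₃ F₂)}
      vmin) :
    0 < vmin ∧
      ∀ 𝒵 ⊆ 𝒜 ∪ ℬ,
        0 < Finset.univ.sup' Finset.univ_nonempty (fun a : A =>
              ∑ F₁ ∈ 𝒵, ∑ F₂ ∈ 𝒵, if F₁ a ≠ F₂ a then r F₁ F₂ else 0) →
          (Finset.univ.sup' Finset.univ_nonempty (fun a : A =>
              ∑ F₁ ∈ 𝒵, ∑ F₂ ∈ 𝒵, if F₁ a ≠ F₂ a then r F₁ F₂ else 0)) / (2 * vmin) ≤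
            ∑ F₁ ∈ 𝒵, ∑ F₂ ∈ 𝒜 ∪ ℬ, r F₁ F₂ := by
  classical
  have hv0 : 0 < vmin := by
    obtain ⟨F₁, hF₁, F₂, hF₂, a, hr, hne, hw⟩ := hvmin.1
    have hd1 := hdenA F₁ hF₁
    have hd2 := hdenB F₂ hF₂
    have hn1 : 0 < ∑ F₃ ∈ ℬ.filter (fun F₃ => F₁ a ≠ F₃ a), r F₁ F₃ := by
      have hmem : F₂ ∈ ℬ.filter (fun F₃ => F₁ a ≠ F₃ a) := by
        simp [Finset.mem_filter, hF₂, hne]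
      calc (0:ℝ) < r F₁ F₂ := hr
        _ ≤ _ := Finset.single_le_sum (fun i _ => hnonneg F₁ i) hmem
    have hn2 : 0 < ∑ F₃ ∈ 𝒜.filter (fun F₃ => F₂ a ≠ F₃ a), r F₃ F₂ := by
      have hmem : F₁ ∈ 𝒜.filter (fun F₃ => F₂ a ≠ F₃ a) := by
        simp [Finset.mem_filter, hF₁, Ne.symm hne]
      calc (0:ℝ) < r F₁ F₂ := hr
        _ ≤ _ := Finset.single_le_sum (fun i _ => hnonneg i F₂) hmem
    rw [hw]
    exact lt_min (div_pos hn1 hd1) (div_pos hn2 hd2)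
  refine ⟨hv0, ?_⟩
  intro 𝒵 h𝒵 _
  set M := ∑ F₁ ∈ 𝒵, ∑ F₂ ∈ 𝒜 ∪ ℬ, r F₁ F₂ with hM
  rw [div_le_iff₀ (by positivity)]
  apply Finset.sup'_le
  intro a _
  set ZA := 𝒵 ∩ 𝒜 with hZA'
  set ZB := 𝒵 ∩ ℬ with hZB'
  have hZAsub : ZA ⊆ 𝒜 := Finset.inter_subset_right
  have hZBsub : ZB ⊆ ℬ := Finset.inter_subset_right
  have hZ : 𝒵 = ZA ∪ ZB := by
    ext F
    simp only [hZA', hZB', Finset.mem_union, Finset.mem_inter]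
    constructor
    · intro hF
      rcases Finset.mem_union.1 (h𝒵 hF) with h | h
      · exact Or.inl ⟨hF, h⟩
      · exact Or.inr ⟨hF, h⟩
    · rintro (⟨h, _⟩ | ⟨h, _⟩) <;> exact h
  have hdZ : Disjoint ZA ZB :=
    hdisj.mono hZAsub hZBsub
  -- M decomposition
  have hMeq : M = (∑ F₁ ∈ ZA, ∑ F₃ ∈ ℬ, r F₁ F₃) + ∑ F₂ ∈ ZB, ∑ F₃ ∈ 𝒜, r F₃ F₂ := by
    rw [hM, hZ, Finset.sum_union hdZ]
    congr 1
    · refine Finset.sum_congr rfl fun F₁ h₁ => ?_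
      rw [Finset.sum_union hdisj]
      have : ∑ F₂ ∈ 𝒜, r F₁ F₂ = 0 :=
        Finset.sum_eq_zero fun F₂ h₂ => hzero F₁ F₂ (Or.inl ⟨hZAsub h₁, h₂⟩)
      rw [this, zero_add]
    · refine Finset.sum_congr rfl fun F₂ h₂ => ?_
      rw [Finset.sum_union hdisj]
      have h0 : ∑ F₃ ∈ ℬ, r F₂ F₃ = 0 :=
        Finset.sum_eq_zero fun F₃ h₃ => hzero F₂ F₃ (Or.inr ⟨hZBsub h₂, h₃⟩)
      rw [h0, add_zero]
      exact Finset.sum_congr rfl fun F₃ _ => hsymm F₂ F₃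
  -- splitting the double sum
  have hsplit : ∑ F₁ ∈ 𝒵, ∑ F₂ ∈ 𝒵, (if F₁ a ≠ F₂ a then r F₁ F₂ else 0)
      = 2 * ∑ F₁ ∈ ZA, ∑ F₂ ∈ ZB, (if F₁ a ≠ F₂ a then r F₁ F₂ else 0) := by
    rw [hZ, Finset.sum_union hdZ]
    have hin : ∀ (s : Finset (A → B)), ∑ F₁ ∈ s, ∑ F₂ ∈ ZA ∪ ZB, (if F₁ a ≠ F₂ a then r F₁ F₂ else 0)
        = ∑ F₁ ∈ s, ((∑ F₂ ∈ ZA, (if F₁ a ≠ F₂ a then r F₁ F₂ else 0))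
            + ∑ F₂ ∈ ZB, (if F₁ a ≠ F₂ a then r F₁ F₂ else 0)) :=
      fun s => Finset.sum_congr rfl fun F₁ _ => Finset.sum_union hdZ
    rw [hin ZA, hin ZB, Finset.sum_add_distrib, Finset.sum_add_distrib]
    have hAA : ∑ F₁ ∈ ZA, ∑ F₂ ∈ ZA, (if F₁ a ≠ F₂ a then r F₁ F₂ else 0) = 0 :=
      Finset.sum_eq_zero fun F₁ h₁ => Finset.sum_eq_zero fun F₂ h₂ => by
        rw [hzero F₁ F₂ (Or.inl ⟨hZAsub h₁, hZAsub h₂⟩)]; simp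
    have hBB : ∑ F₁ ∈ ZB, ∑ F₂ ∈ ZB, (if F₁ a ≠ F₂ a then r F₁ F₂ else 0) = 0 :=
      Finset.sum_eq_zero fun F₁ h₁ => Finset.sum_eq_zero fun F₂ h₂ => by
        rw [hzero F₁ F₂ (Or.inr ⟨hZBsub h₁, hZBsub h₂⟩)]; simp
    have hBA : ∑ F₁ ∈ ZB, ∑ F₂ ∈ ZA, (if F₁ a ≠ F₂ a then r F₁ F₂ else 0)
        = ∑ F₁ ∈ ZA, ∑ F₂ ∈ ZB, (if F₁ a ≠ F₂ a then r F₁ F₂ else 0) := by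
      rw [Finset.sum_comm]
      refine Finset.sum_congr rfl fun F₁ _ => Finset.sum_congr rfl fun F₂ _ => ?_
      rw [hsymm F₂ F₁]
      congr 1
      simp [ne_comm]
    rw [hAA, hBB, hBA]
    ring
  rw [hsplit]
  -- key pointwise bound
  have key : ∀ F₁ ∈ ZA, ∀ F₂ ∈ ZB,
      (if F₁ a ≠ F₂ a then r F₁ F₂ else 0) ≤
        (if (∑ F₃ ∈ ℬ.filter (fun F₃ => F₁ a ≠ F₃ a), r F₁ F₃) ≤ vmin * ∑ F₃ ∈ ℬ, r F₁ F₃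
          then (if F₁ a ≠ F₂ a then r F₁ F₂ else 0) else 0)
        + (if (∑ F₃ ∈ 𝒜.filter (fun F₃ => F₂ a ≠ F₃ a), r F₃ F₂) ≤ vmin * ∑ F₃ ∈ 𝒜, r F₃ F₂
          then (if F₁ a ≠ F₂ a then r F₁ F₂ else 0) else 0) := by
    intro F₁ h₁ F₂ h₂
    by_cases hne : F₁ a ≠ F₂ a
    · simp only [if_pos hne]
      have hr0 := hnonneg F₁ F₂
      rcases hr0.eq_or_lt with h | h
      · rw [← h]; simp
      · have hwmem : min
            ((∑ F₃ ∈ ℬ.filter (fun F₃ => F₁ a ≠ F₃ a), r F₁ F₃) / ∑ F₃ ∈ ℬ, r F₁ F₃)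
            ((∑ F₃ ∈ 𝒜.filter (fun F₃ => F₂ a ≠ F₃ a), r F₃ F₂) / ∑ F₃ ∈ 𝒜, r F₃ F₂)
            ≤ vmin :=
          hvmin.2 ⟨F₁, hZAsub h₁, F₂, hZBsub h₂, a, h, hne, rfl⟩
        rcases min_le_iff.1 hwmem with hc | hc
        · have hc' : (∑ F₃ ∈ ℬ.filter (fun F₃ => F₁ a ≠ F₃ a), r F₁ F₃)
              ≤ vmin * ∑ F₃ ∈ ℬ, r F₁ F₃ :=
            (div_le_iff₀ (hdenA F₁ (hZAsub h₁))).1 hc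
          rw [if_pos hc']
          have : (0:ℝ) ≤ (if (∑ F₃ ∈ 𝒜.filter (fun F₃ => F₂ a ≠ F₃ a), r F₃ F₂)
              ≤ vmin * ∑ F₃ ∈ 𝒜, r F₃ F₂ then r F₁ F₂ else 0) := by
            split
            · exact hnonneg F₁ F₂
            · exact le_refl 0
          linarith
        · have hc' : (∑ F₃ ∈ 𝒜.filter (fun F₃ => F₂ a ≠ F₃ a), r F₃ F₂)
              ≤ vmin * ∑ F₃ ∈ 𝒜, r F₃ F₂ :=
            (div_le_iff₀ (hdenB F₂ (hZBsub h₂))).1 hc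
          rw [if_pos hc']
          have : (0:ℝ) ≤ (if (∑ F₃ ∈ ℬ.filter (fun F₃ => F₁ a ≠ F₃ a), r F₁ F₃)
              ≤ vmin * ∑ F₃ ∈ ℬ, r F₁ F₃ then r F₁ F₂ else 0) := by
            split
            · exact hnonneg F₁ F₂
            · exact le_refl 0
          linarith
    · simp only [if_neg hne]
      have h1 : (0:ℝ) ≤ (if (∑ F₃ ∈ ℬ.filter (fun F₃ => F₁ a ≠ F₃ a), r F₁ F₃)
          ≤ vmin * ∑ F₃ ∈ ℬ, r F₁ F₃ then (0:ℝ) else 0) := by split <;> simp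
      have h2 : (0:ℝ) ≤ (if (∑ F₃ ∈ 𝒜.filter (fun F₃ => F₂ a ≠ F₃ a), r F₃ F₂)
          ≤ vmin * ∑ F₃ ∈ 𝒜, r F₃ F₂ then (0:ℝ) else 0) := by split <;> simp
      linarith
  -- bound the two partial sums
  have hS1 : ∑ F₁ ∈ ZA, ∑ F₂ ∈ ZB,
      (if (∑ F₃ ∈ ℬ.filter (fun F₃ => F₁ a ≠ F₃ a), r F₁ F₃) ≤ vmin * ∑ F₃ ∈ ℬ, r F₁ F₃
        then (if F₁ a ≠ F₂ a then r F₁ F₂ else 0) else 0)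
      ≤ vmin * ∑ F₁ ∈ ZA, ∑ F₃ ∈ ℬ, r F₁ F₃ := by
    rw [Finset.mul_sum]
    refine Finset.sum_le_sum fun F₁ h₁ => ?_
    have hd1 : (0:ℝ) ≤ vmin * ∑ F₃ ∈ ℬ, r F₁ F₃ :=
      mul_nonneg hv0.le (Finset.sum_nonneg fun i _ => hnonneg F₁ i)
    by_cases hc : (∑ F₃ ∈ ℬ.filter (fun F₃ => F₁ a ≠ F₃ a), r F₁ F₃)
        ≤ vmin * ∑ F₃ ∈ ℬ, r F₁ F₃
    · simp only [if_pos hc]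
      refine le_trans ?_ hc
      rw [← Finset.sum_filter]
      exact Finset.sum_le_sum_of_subset_of_nonneg
        (Finset.filter_subset_filter _ hZBsub)
        (fun i _ _ => hnonneg F₁ i)
    · simp only [if_neg hc, Finset.sum_const_zero]
      exact hd1
  have hS2 : ∑ F₁ ∈ ZA, ∑ F₂ ∈ ZB,
      (if (∑ F₃ ∈ 𝒜.filter (fun F₃ => F₂ a ≠ F₃ a), r F₃ F₂) ≤ vmin * ∑ F₃ ∈ 𝒜, r F₃ F₂
        then (if F₁ a ≠ F₂ a then r F₁ F₂ else 0) else 0)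
      ≤ vmin * ∑ F₂ ∈ ZB, ∑ F₃ ∈ 𝒜, r F₃ F₂ := by
    rw [Finset.sum_comm, Finset.mul_sum]
    refine Finset.sum_le_sum fun F₂ h₂ => ?_
    have hd2 : (0:ℝ) ≤ vmin * ∑ F₃ ∈ 𝒜, r F₃ F₂ :=
      mul_nonneg hv0.le (Finset.sum_nonneg fun i _ => hnonneg i F₂)
    by_cases hc : (∑ F₃ ∈ 𝒜.filter (fun F₃ => F₂ a ≠ F₃ a), r F₃ F₂)
        ≤ vmin * ∑ F₃ ∈ 𝒜, r F₃ F₂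
    · simp only [if_pos hc]
      refine le_trans ?_ hc
      have heq : ∑ F₁ ∈ ZA, (if F₁ a ≠ F₂ a then r F₁ F₂ else 0)
          = ∑ F₁ ∈ ZA.filter (fun F₃ => F₂ a ≠ F₃ a), r F₁ F₂ := by
        rw [Finset.sum_filter]
        refine Finset.sum_congr rfl fun F₁ _ => ?_
        congr 1
        simp [ne_comm]
      rw [heq]
      exact Finset.sum_le_sum_of_subset_of_nonneg
        (Finset.filter_subset_filter _ hZAsub)
        (fun i _ _ => hnonneg i F₂)
    · simp only [if_neg hc, Finset.sum_const_zero]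
      exact hd2
  have hT : ∑ F₁ ∈ ZA, ∑ F₂ ∈ ZB, (if F₁ a ≠ F₂ a then r F₁ F₂ else 0) ≤ vmin * M := by
    calc ∑ F₁ ∈ ZA, ∑ F₂ ∈ ZB, (if F₁ a ≠ F₂ a then r F₁ F₂ else 0)
        ≤ ∑ F₁ ∈ ZA, ∑ F₂ ∈ ZB,
          ((if (∑ F₃ ∈ ℬ.filter (fun F₃ => F₁ a ≠ F₃ a), r F₁ F₃) ≤ vmin * ∑ F₃ ∈ ℬ, r F₁ F₃
            then (if F₁ a ≠ F₂ a then r F₁ F₂ else 0) else 0)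
          + (if (∑ F₃ ∈ 𝒜.filter (fun F₃ => F₂ a ≠ F₃ a), r F₃ F₂) ≤ vmin * ∑ F₃ ∈ 𝒜, r F₃ F₂
            then (if F₁ a ≠ F₂ a then r F₁ F₂ else 0) else 0)) :=
          Finset.sum_le_sum fun F₁ h₁ => Finset.sum_le_sum fun F₂ h₂ => key F₁ h₁ F₂ h₂
      _ = _ + _ := by
          rw [← Finset.sum_add_distrib]
          refine Finset.sum_congr rfl fun F₁ _ => Finset.sum_add_distrib
      _ ≤ vmin * (∑ F₁ ∈ ZA, ∑ F₃ ∈ ℬ, r F₁ F₃) + vmin * ∑ F₂ ∈ ZB, ∑ F₃ ∈ 𝒜, r F₃ F₂ :=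
          add_le_add hS1 hS2
      _ = vmin * M := by rw [hMeq]; ring
  linarith
end

section
/- Let x ∈ {1} × [n]^L, v ∈ V, and j ∈ [L], and let g be the vertex congestion of 𝒫. Then the number of sequences y ∈ {1} × [n]^L with max{i : (x_1, …, x_i) = (y_1, …, y_i)} = j and with v appearing on Tail(j, S_y) is at most N_v(x_j)·n^{L−j} + L·g·n^{L−j−1}. -/
open Finset
open Fin.NatCast

variable {n L : ℕ}

section Aux

lemma sup_mem_of_one_le {F : Finset ℕ} {j : ℕ} (hj : 1 ≤ j) (h : F.sup id = j) : j ∈ F := by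
  have hne : F.Nonempty := by
    by_contra hc
    rw [Finset.not_nonempty_iff_eq_empty] at hc
    subst hc
    simp at h
    omega
  obtain ⟨b, hb, hbe⟩ := Finset.exists_mem_eq_sup F hne id
  rw [hbe] at h
  simpa [← h] using hb

lemma myPrefix {n L : ℕ} {x y : Fin (L + 1) → Fin n} {j : ℕ} (hj1 : 1 ≤ j)
    (h : maxPrefix x y = j) : ∀ i : Fin (L + 1), (i : ℕ) < j → x i = y i := by
  unfold maxPrefix at h
  have hmem := sup_mem_of_one_le hj1 h
  exact (Finset.mem_filter.mp hmem).2

lemma card_filter_pi {N n : ℕ} (S : Fin N → Finset (Fin n)) :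
    (Finset.univ.filter fun y : Fin N → Fin n => ∀ c, y c ∈ S c).card = ∏ c, (S c).card := by
  have h : (Finset.univ.filter fun y : Fin N → Fin n => ∀ c, y c ∈ S c)
      = Fintype.piFinset S := by
    ext y; simp [Fintype.mem_piFinset]
  rw [h, Fintype.card_piFinset]

lemma prod_piece1 {j L N n : ℕ} (hj : j ≤ L) :
    (∏ k ∈ Finset.range (L + 1), (if k < j then 1 else if k = j then N else n))
      = N * n ^ (L - j) := by
  rw [Finset.range_eq_Ico,
    ← Finset.prod_Ico_consecutive _ (Nat.zero_le j) (by omega : j ≤ L + 1)]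
  have h1 : (∏ k ∈ Finset.Ico 0 j, (if k < j then 1 else if k = j then N else n)) = 1 := by
    apply Finset.prod_eq_one
    intro k hk
    rw [Finset.mem_Ico] at hk
    simp [hk.2]
  rw [h1, one_mul, Finset.prod_eq_prod_Ico_succ_bot (by omega : j < L + 1)]
  have h2 : (∏ k ∈ Finset.Ico (j + 1) (L + 1),
      (if k < j then 1 else if k = j then N else n)) = n ^ (L - j) := by
    have hc : ∀ k ∈ Finset.Ico (j + 1) (L + 1),
        (if k < j then 1 else if k = j then N else n) = n := by
      intro k hk
      rw [Finset.mem_Ico] at hk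
      have h3 : ¬ k < j := by omega
      have h4 : k ≠ j := by omega
      simp [h3, h4]
    rw [Finset.prod_congr rfl hc, Finset.prod_const, Nat.card_Ico]
    congr 1
    omega
  rw [h2]
  simp

lemma prod_piece2 {j i L N n : ℕ} (hji : j ≤ i) (hiL : i < L) :
    (∏ k ∈ Finset.range (L + 1),
      (if k < j then 1 else if k = i then 1 else if k = i + 1 then N else n))
      = N * n ^ (L - j - 1) := by
  set f : ℕ → ℕ := fun k =>
    if k < j then 1 else if k = i then 1 else if k = i + 1 then N else n with hf
  rw [Finset.range_eq_Ico,
    ← Finset.prod_Ico_consecutive f (Nat.zero_le j) (by omega : j ≤ L + 1)]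
  have h1 : (∏ k ∈ Finset.Ico 0 j, f k) = 1 := by
    apply Finset.prod_eq_one
    intro k hk
    rw [Finset.mem_Ico] at hk
    simp [hf, hk.2]
  rw [h1, one_mul]
  have hi1 : i ∈ Finset.Ico j (L + 1) := by rw [Finset.mem_Ico]; omega
  rw [← Finset.mul_prod_erase _ f hi1]
  have hi2 : i + 1 ∈ (Finset.Ico j (L + 1)).erase i := by
    rw [Finset.mem_erase, Finset.mem_Ico]; omega
  rw [← Finset.mul_prod_erase _ f hi2]
  have hfi : f i = 1 := by simp [hf]
  have hfi1 : f (i + 1) = N := by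
    have h3 : ¬ (i + 1 < j) := by omega
    have h4 : i + 1 ≠ i := by omega
    simp [hf, h3, h4]
  have hrest : (∏ k ∈ ((Finset.Ico j (L + 1)).erase i).erase (i + 1), f k)
      = n ^ (L - j - 1) := by
    have hc : ∀ k ∈ ((Finset.Ico j (L + 1)).erase i).erase (i + 1), f k = n := by
      intro k hk
      rw [Finset.mem_erase, Finset.mem_erase, Finset.mem_Ico] at hk
      obtain ⟨h5, h6, h7, h8⟩ := hk
      have h9 : ¬ k < j := by omega
      simp [hf, h9, h6, h5]
    rw [Finset.prod_congr rfl hc, Finset.prod_const,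
      Finset.card_erase_of_mem hi2, Finset.card_erase_of_mem hi1, Nat.card_Ico]
    congr 1
    omega
  rw [hfi, hfi1, hrest, one_mul]

lemma sum_Npaths_le {n : ℕ} (P : Fin n → Fin n → List (Fin n)) (v : Fin n) :
    ∑ u : Fin n, Npaths P v u ≤ congestion P := by
  have h1 : ∀ u : Fin n, Npaths P v u ≤ ∑ w : Fin n, (P u w).count v := by
    intro u
    unfold Npaths
    rw [Finset.card_eq_sum_ones]
    calc (∑ _w ∈ Finset.univ.filter fun w => v ∈ P u w, 1)
        ≤ ∑ w ∈ Finset.univ.filter fun w => v ∈ P u w, (P u w).count v := by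
          apply Finset.sum_le_sum
          intro w hw
          rw [Finset.mem_filter] at hw
          exact List.one_le_count_iff.mpr hw.2
      _ ≤ ∑ w : Fin n, (P u w).count v := by
          apply Finset.sum_le_sum_of_subset (Finset.filter_subset _ _)
  calc ∑ u : Fin n, Npaths P v u ≤ ∑ u : Fin n, ∑ w : Fin n, (P u w).count v :=
        Finset.sum_le_sum fun u _ => h1 u
    _ ≤ congestion P := by
        unfold congestion
        exact Finset.le_sup (f := fun w => ∑ u : Fin n, ∑ v' : Fin n, (P u v').count w)
          (Finset.mem_univ v)

end Aux

/-- Let `x ∈ {1} × [n]^L`, `v ∈ V`, `j ∈ [L]`, and let `g` be the vertex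
congestion of `𝒫`.  Then the number of sequences `y ∈ {1} × [n]^L` with
`maxPrefix x y = j` and `v` appearing on `Tail(j, S_y)` is at most
`N_v(x_j) · n^{L−j} + L · g · n^{L−j−1}`. -/
theorem stmt14 (hn : 0 < n) (hL : 0 < L)
    (G : SimpleGraph (Fin n)) (hconn : G.Connected)
    (P : Fin n → Fin n → List (Fin n))
    (hhead : ∀ u v, (P u v).head? = some u)
    (hlast : ∀ u v, (P u v).getLast? = some v)
    (hchain : ∀ u v, (P u v).Chain' G.Adj)
    (hnodup : ∀ u v, (P u v).Nodup)
    (hself : ∀ u, P u u = [u])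
    (x : Fin (L + 1) → Fin n) (hx0 : x 0 = (⟨0, hn⟩ : Fin n))
    (v : Fin n) (j : ℕ) (hj1 : 1 ≤ j) (hjL : j ≤ L) :
    (((Finset.univ.filter
        (fun y : Fin (L + 1) → Fin n =>
          y 0 = (⟨0, hn⟩ : Fin n) ∧ maxPrefix x y = j ∧ v ∈ tailWalk P y j)).card : ℝ)) ≤
      (Npaths P v (x (j - 1)) : ℝ) * (n : ℝ) ^ ((L : ℤ) - (j : ℤ)) +
        (L : ℝ) * (congestion P : ℝ) * (n : ℝ) ^ ((L : ℤ) - (j : ℤ) - 1) := by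
  classical
  have hcast : ∀ a : ℕ, a < L → ((a : Fin (L + 1)) + 1) = ((a + 1 : ℕ) : Fin (L + 1)) := by
    intro a ha
    push_cast
    ring
  have ecast : ((j : Fin (L + 1)) - 1) = ((j - 1 : ℕ) : Fin (L + 1)) := by
    have h := hcast (j - 1) (by omega)
    rw [Nat.sub_add_cancel hj1] at h
    rw [← h]
    exact add_sub_cancel_right _ _
  set SA : Finset (Fin (L + 1) → Fin n) :=
    Finset.univ.filter (fun y : Fin (L + 1) → Fin n => ∀ c : Fin (L + 1),
      y c ∈ (if (c : ℕ) < j then {x c}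
        else if (c : ℕ) = j then Finset.univ.filter (fun w => v ∈ P (x (j - 1)) w)
        else Finset.univ)) with hSA
  set SI : ℕ → Fin n → Finset (Fin (L + 1) → Fin n) := fun i u =>
    Finset.univ.filter (fun y : Fin (L + 1) → Fin n => ∀ c : Fin (L + 1),
      y c ∈ (if (c : ℕ) < j then {x c}
        else if (c : ℕ) = i then {u}
        else if (c : ℕ) = i + 1 then Finset.univ.filter (fun w => v ∈ P u w)
        else Finset.univ)) with hSI
  have hsub : (Finset.univ.filter
      (fun y : Fin (L + 1) → Fin n =>
        y 0 = (⟨0, hn⟩ : Fin n) ∧ maxPrefix x y = j ∧ v ∈ tailWalk P y j))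
      ⊆ SA ∪ (Finset.Ico j L).biUnion
          (fun i => Finset.univ.biUnion (fun u => SI i u)) := by
    intro y hy
    rw [Finset.mem_filter] at hy
    obtain ⟨-, h0, hmax, htail⟩ := hy
    have hpre : ∀ i : Fin (L + 1), (i : ℕ) < j → x i = y i := myPrefix hj1 hmax
    unfold tailWalk at htail
    rw [if_pos hjL] at htail
    have htail' := List.mem_of_mem_erase htail
    rw [List.mem_append] at htail'
    rcases htail' with hA | hB
    · apply Finset.mem_union_left
      rw [hSA, Finset.mem_filter]
      refine ⟨Finset.mem_univ _, fun c => ?_⟩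
      by_cases h1 : (c : ℕ) < j
      · rw [if_pos h1, Finset.mem_singleton]
        exact (hpre c h1).symm
      · rw [if_neg h1]
        by_cases h2 : (c : ℕ) = j
        · rw [if_pos h2, Finset.mem_filter]
          refine ⟨Finset.mem_univ _, ?_⟩
          unfold seg at hA
          have e6 : (((j - 1 : ℕ) : Fin (L + 1)) + 1) = ((j : ℕ) : Fin (L + 1)) := by
            rw [hcast (j - 1) (by omega), Nat.sub_add_cancel hj1]
          rw [e6] at hA
          have e3 : y ((j - 1 : ℕ) : Fin (L + 1)) = x ((j - 1 : ℕ) : Fin (L + 1)) :=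
            (hpre _ (by rw [Fin.val_cast_of_lt (show j - 1 < L + 1 by omega)]; omega)).symm
          rw [e3] at hA
          have e4 : c = ((j : ℕ) : Fin (L + 1)) := by
            apply Fin.ext
            rw [Fin.val_cast_of_lt (show j < L + 1 by omega)]
            exact h2
          rw [e4, ecast]
          exact hA
        · rw [if_neg h2]
          exact Finset.mem_univ _
    · rw [List.mem_flatMap] at hB
      obtain ⟨i, hidrop, hvi⟩ := hB
      have hiL2 : i < L := by
        have := (List.drop_sublist j (List.range L)).mem hidrop
        simpa using this
      have hji : j ≤ i := by
        rcases List.getElem_of_mem hidrop with ⟨k, hk, he⟩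
        rw [List.getElem_drop, List.getElem_range] at he
        omega
      have hvmem : v ∈ seg P y i := List.mem_of_mem_tail hvi
      unfold seg at hvmem
      rw [hcast i hiL2] at hvmem
      apply Finset.mem_union_right
      rw [Finset.mem_biUnion]
      refine ⟨i, Finset.mem_Ico.mpr ⟨hji, hiL2⟩, ?_⟩
      rw [Finset.mem_biUnion]
      refine ⟨y ((i : ℕ) : Fin (L + 1)), Finset.mem_univ _, ?_⟩
      simp only [hSI]
      rw [Finset.mem_filter]
      refine ⟨Finset.mem_univ _, fun c => ?_⟩
      by_cases h1 : (c : ℕ) < j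
      · rw [if_pos h1, Finset.mem_singleton]
        exact (hpre c h1).symm
      · rw [if_neg h1]
        by_cases h2 : (c : ℕ) = i
        · rw [if_pos h2, Finset.mem_singleton]
          have e4 : c = ((i : ℕ) : Fin (L + 1)) := by
            apply Fin.ext
            rw [Fin.val_cast_of_lt (show i < L + 1 by omega)]
            exact h2
          rw [e4]
        · rw [if_neg h2]
          by_cases h3 : (c : ℕ) = i + 1
          · rw [if_pos h3, Finset.mem_filter]
            refine ⟨Finset.mem_univ _, ?_⟩
            have e4 : c = ((i + 1 : ℕ) : Fin (L + 1)) := by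
              apply Fin.ext
              rw [Fin.val_cast_of_lt (show i + 1 < L + 1 by omega)]
              exact h3
            rw [e4]
            exact hvmem
          · rw [if_neg h3]
            exact Finset.mem_univ _
  have cardSA : SA.card = Npaths P v (x (j - 1)) * n ^ (L - j) := by
    rw [hSA, card_filter_pi]
    have hcc : ∀ c : Fin (L + 1),
        (if (c : ℕ) < j then ({x c} : Finset (Fin n))
          else if (c : ℕ) = j then Finset.univ.filter (fun w => v ∈ P (x (j - 1)) w)
          else Finset.univ).card
        = (if (c : ℕ) < j then 1
            else if (c : ℕ) = j then Npaths P v (x (j - 1)) else n) := by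
      intro c
      by_cases h1 : (c : ℕ) < j
      · rw [if_pos h1, if_pos h1, Finset.card_singleton]
      · rw [if_neg h1, if_neg h1]
        by_cases h2 : (c : ℕ) = j
        · rw [if_pos h2, if_pos h2]
          simp [Npaths]
        · rw [if_neg h2, if_neg h2, Finset.card_univ, Fintype.card_fin]
    rw [Finset.prod_congr rfl (fun c _ => hcc c)]
    exact (Fin.prod_univ_eq_prod_range
      (fun k => if k < j then 1 else if k = j then Npaths P v (x (j - 1)) else n)
      (L + 1)).trans (prod_piece1 hjL)
  have cardSI : ∀ i ∈ Finset.Ico j L, ∀ u : Fin n,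
      (SI i u).card = Npaths P v u * n ^ (L - j - 1) := by
    intro i hi u
    rw [Finset.mem_Ico] at hi
    simp only [hSI]
    rw [card_filter_pi]
    have hcc : ∀ c : Fin (L + 1),
        (if (c : ℕ) < j then ({x c} : Finset (Fin n))
          else if (c : ℕ) = i then {u}
          else if (c : ℕ) = i + 1 then Finset.univ.filter (fun w => v ∈ P u w)
          else Finset.univ).card
        = (if (c : ℕ) < j then 1
            else if (c : ℕ) = i then 1
            else if (c : ℕ) = i + 1 then Npaths P v u else n) := by
      intro c
      by_cases h1 : (c : ℕ) < j
      · rw [if_pos h1, if_pos h1, Finset.card_singleton]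
      · rw [if_neg h1, if_neg h1]
        by_cases h2 : (c : ℕ) = i
        · rw [if_pos h2, if_pos h2, Finset.card_singleton]
        · rw [if_neg h2, if_neg h2]
          by_cases h3 : (c : ℕ) = i + 1
          · rw [if_pos h3, if_pos h3]
            simp [Npaths]
          · rw [if_neg h3, if_neg h3, Finset.card_univ, Fintype.card_fin]
    rw [Finset.prod_congr rfl (fun c _ => hcc c)]
    exact (Fin.prod_univ_eq_prod_range
      (fun k => if k < j then 1 else if k = i then 1
        else if k = i + 1 then Npaths P v u else n)
      (L + 1)).trans (prod_piece2 hi.1 hi.2)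
  have hbu : ((Finset.Ico j L).biUnion
      (fun i => Finset.univ.biUnion (fun u => SI i u))).card
      ≤ (L - j) * (congestion P * n ^ (L - j - 1)) := by
    calc ((Finset.Ico j L).biUnion
        (fun i => Finset.univ.biUnion (fun u => SI i u))).card
        ≤ ∑ i ∈ Finset.Ico j L,
            (Finset.univ.biUnion (fun u => SI i u)).card := Finset.card_biUnion_le
      _ ≤ ∑ i ∈ Finset.Ico j L, (congestion P * n ^ (L - j - 1)) := by
          apply Finset.sum_le_sum
          intro i hi
          calc (Finset.univ.biUnion (fun u => SI i u)).card
              ≤ ∑ u : Fin n, (SI i u).card := Finset.card_biUnion_le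
            _ = ∑ u : Fin n, Npaths P v u * n ^ (L - j - 1) := by
                apply Finset.sum_congr rfl
                intro u _
                exact cardSI i hi u
            _ = (∑ u : Fin n, Npaths P v u) * n ^ (L - j - 1) := by
                rw [Finset.sum_mul]
            _ ≤ congestion P * n ^ (L - j - 1) :=
                Nat.mul_le_mul_right _ (sum_Npaths_le P v)
      _ = (L - j) * (congestion P * n ^ (L - j - 1)) := by
          rw [Finset.sum_const, Nat.card_Ico, smul_eq_mul]
  have hcard : (Finset.univ.filter
      (fun y : Fin (L + 1) → Fin n =>
        y 0 = (⟨0, hn⟩ : Fin n) ∧ maxPrefix x y = j ∧ v ∈ tailWalk P y j)).card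
      ≤ Npaths P v (x (j - 1)) * n ^ (L - j)
        + (L - j) * (congestion P * n ^ (L - j - 1)) := by
    calc (Finset.univ.filter
        (fun y : Fin (L + 1) → Fin n =>
          y 0 = (⟨0, hn⟩ : Fin n) ∧ maxPrefix x y = j ∧ v ∈ tailWalk P y j)).card
        ≤ (SA ∪ (Finset.Ico j L).biUnion
            (fun i => Finset.univ.biUnion (fun u => SI i u))).card :=
          Finset.card_le_card hsub
      _ ≤ SA.card + ((Finset.Ico j L).biUnion
            (fun i => Finset.univ.biUnion (fun u => SI i u))).card :=
          Finset.card_union_le _ _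
      _ ≤ Npaths P v (x (j - 1)) * n ^ (L - j)
          + (L - j) * (congestion P * n ^ (L - j - 1)) := by
          rw [cardSA]
          exact Nat.add_le_add_left hbu _
  clear_value SA SI
  clear hsub hbu cardSA cardSI hSA hSI SA SI hcast ecast hconn hhead hlast hchain hnodup hself hx0 hL G
  have hnR : (0 : ℝ) < (n : ℝ) := by exact_mod_cast hn
  have e1 : (n : ℝ) ^ ((L : ℤ) - (j : ℤ)) = (n : ℝ) ^ (L - j : ℕ) := by
    rw [show (L : ℤ) - (j : ℤ) = ((L - j : ℕ) : ℤ) from (Nat.cast_sub hjL).symm, zpow_natCast]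
  calc ((Finset.univ.filter
      (fun y : Fin (L + 1) → Fin n =>
        y 0 = (⟨0, hn⟩ : Fin n) ∧ maxPrefix x y = j ∧ v ∈ tailWalk P y j)).card : ℝ)
      ≤ (Npaths P v (x (j - 1)) : ℝ) * (n : ℝ) ^ (L - j : ℕ)
        + ((L - j : ℕ) : ℝ) * ((congestion P : ℝ) * (n : ℝ) ^ (L - j - 1 : ℕ)) := by
        exact_mod_cast hcard
    _ ≤ (Npaths P v (x (j - 1)) : ℝ) * (n : ℝ) ^ ((L : ℤ) - (j : ℤ))
        + (L : ℝ) * (congestion P : ℝ) * (n : ℝ) ^ ((L : ℤ) - (j : ℤ) - 1) := by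
        rw [e1]
        apply add_le_add le_rfl
        by_cases hjlt : j < L
        · have e2 : (n : ℝ) ^ ((L : ℤ) - (j : ℤ) - 1) = (n : ℝ) ^ (L - j - 1 : ℕ) := by
            rw [show (L : ℤ) - (j : ℤ) - 1 = ((L - j - 1 : ℕ) : ℤ) from by
              rw [Nat.cast_sub (Nat.sub_pos_of_lt hjlt), Nat.cast_sub hjL, Nat.cast_one],
              zpow_natCast]
          rw [e2, mul_assoc]
          apply mul_le_mul_of_nonneg_right
          · exact_mod_cast Nat.cast_le.mpr (Nat.sub_le L j)
          · positivity
        · have hje : j = L := le_antisymm hjL (not_lt.mp hjlt)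
          have hz : ((L - j : ℕ) : ℝ) = 0 := by
            rw [hje]; simp
          rw [hz, zero_mul]
          positivity
end

section
/- There exists an all-pairs set of paths 𝒫 in G whose vertex congestion is at most (d+1)·n. -/
private lemma sum_count_eq_length {𝒢 : Type*} [Fintype 𝒢] [DecidableEq 𝒢] (l : List 𝒢) :
    ∑ x : 𝒢, l.count x = l.length := by
  induction l with
  | nil => simp
  | cons a l ih =>
    simp only [List.count_cons, Finset.sum_add_distrib, ih]
    simp [Finset.sum_ite_eq, add_comm]

/-- Let `G` be the undirected Cayley graph of a finite group `𝒢` with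
generating set `S`, with `n` vertices and diameter `d`.  Then there exists an all-pairs
set of paths `𝒫` in `G` whose vertex congestion is at most `(d + 1) · n`. -/
theorem stmt17 {𝒢 : Type*} [Group 𝒢] [Fintype 𝒢] [DecidableEq 𝒢]
    (S : Set 𝒢) (hSgen : Subgroup.closure S = ⊤)
    (G : SimpleGraph 𝒢)
    (hG : ∀ u v, G.Adj u v ↔ u ≠ v ∧ (u⁻¹ * v ∈ S ∨ v⁻¹ * u ∈ S)) :
    ∃ P : 𝒢 → 𝒢 → List 𝒢,
      (∀ u v, (P u v).head? = some u) ∧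
      (∀ u v, (P u v).getLast? = some v) ∧
      (∀ u v, (P u v).Chain' G.Adj) ∧
      (∀ u v, (P u v).Nodup) ∧
      (∀ u, P u u = [u]) ∧
      (∀ w : 𝒢, ∑ u : 𝒢, ∑ v : 𝒢, (P u v).count w ≤ (G.diam + 1) * Fintype.card 𝒢) := by
  classical
  -- adjacency is invariant under left multiplication
  have hadj : ∀ (g a b : 𝒢), G.Adj a b → G.Adj (g * a) (g * b) := by
    intro g a b hab
    rw [hG] at hab ⊢
    refine ⟨by simpa using hab.1, ?_⟩
    simpa [mul_assoc] using hab.2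
  -- reachability is invariant under left multiplication
  have hmul : ∀ (g a b : 𝒢), G.Reachable a b → G.Reachable (g * a) (g * b) := by
    intro g a b h
    exact h.map ⟨fun x => g * x, fun hx => hadj g _ _ hx⟩
  -- everybody reachable from 1
  have hreach1 : ∀ g : 𝒢, G.Reachable 1 g := by
    intro g
    have hg : g ∈ Subgroup.closure S := by rw [hSgen]; trivial
    induction hg using Subgroup.closure_induction with
    | mem x hx =>
      by_cases hx1 : x = 1
      · subst hx1; exact SimpleGraph.Reachable.refl 1
      · exact SimpleGraph.Adj.reachable ((hG 1 x).2 ⟨fun h => hx1 h.symm, Or.inl (by simpa using hx)⟩)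
    | one => exact SimpleGraph.Reachable.refl 1
    | mul a b _ _ ha hb =>
      refine ha.trans ?_
      have := hmul a 1 b hb
      simpa using this
    | inv a _ ha =>
      have := hmul a⁻¹ 1 a ha
      rw [inv_mul_cancel, mul_one] at this
      exact this.symm
  have hconn : G.Connected := ⟨fun u v => (hreach1 u).symm.trans (hreach1 v)⟩
  have hetop : G.ediam ≠ ⊤ := by
    obtain ⟨u, v, huv⟩ := SimpleGraph.exists_edist_eq_ediam_of_finite (G := G)
    rw [← huv]
    simpa [SimpleGraph.edist_ne_top_iff_reachable] using hconn.preconnected u v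
  -- choose shortest paths from 1
  have hQ : ∀ g : 𝒢, ∃ l : List 𝒢, l.head? = some 1 ∧ l.getLast? = some g ∧
      l.Chain' G.Adj ∧ l.Nodup ∧ l.length ≤ G.diam + 1 ∧ (g = 1 → l = [1]) := by
    intro g
    by_cases hg1 : g = 1
    · subst hg1
      exact ⟨[1], rfl, rfl, List.isChain_singleton _, by simp, by simp, fun _ => rfl⟩
    · obtain ⟨p, hp, hlen⟩ := (hreach1 g).exists_path_of_dist
      refine ⟨p.support, ?_, ?_, p.isChain_adj_support, hp.support_nodup, ?_, fun h => absurd h hg1⟩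
      · rw [List.head?_eq_head (by simp)]
        simp
      · rw [List.getLast?_eq_getLast (by simp)]
        simp
      · rw [SimpleGraph.Walk.length_support, hlen]
        exact Nat.add_le_add_right (SimpleGraph.dist_le_diam hetop) 1
  choose Q hQhead hQlast hQchain hQnodup hQlen hQone using hQ
  refine ⟨fun u v => (Q (u⁻¹ * v)).map (u * ·), ?_, ?_, ?_, ?_, ?_, ?_⟩
  · intro u v
    rw [List.head?_map, hQhead]
    simp
  · intro u v
    rw [List.getLast?_map, hQlast]
    simp
  · intro u v
    show List.IsChain _ _
    rw [List.isChain_map]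
    exact (hQchain _).imp fun a b h => hadj u a b h
  · intro u v
    exact (hQnodup _).map (mul_right_injective u)
  · intro u
    show List.map (fun x => u * x) (Q (u⁻¹ * u)) = [u]
    rw [inv_mul_cancel, hQone 1 rfl]
    simp
  · intro w
    have key : ∀ u v : 𝒢, ((Q (u⁻¹ * v)).map (u * ·)).count w = (Q (u⁻¹ * v)).count (u⁻¹ * w) := by
      intro u v
      have hw : w = u * (u⁻¹ * w) := by group
      conv_lhs => rw [hw]
      rw [List.count_map_of_injective _ _ (mul_right_injective u)]
    calc ∑ u : 𝒢, ∑ v : 𝒢, ((Q (u⁻¹ * v)).map (u * ·)).count w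
        = ∑ u : 𝒢, ∑ v : 𝒢, (Q v).count (u⁻¹ * w) := by
          refine Finset.sum_congr rfl fun u _ => ?_
          rw [Finset.sum_congr rfl fun v _ => key u v]
          exact Fintype.sum_equiv (Equiv.mulLeft u⁻¹) _ _ (fun v => by simp)
      _ = ∑ v : 𝒢, ∑ u : 𝒢, (Q v).count (u⁻¹ * w) := Finset.sum_comm
      _ = ∑ v : 𝒢, ∑ x : 𝒢, (Q v).count x := by
          refine Finset.sum_congr rfl fun v _ => ?_
          exact Fintype.sum_equiv ⟨fun u => u⁻¹ * w, fun x => w * x⁻¹, fun u => by group,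
            fun x => by group⟩ _ _ (fun u => rfl)
      _ = ∑ v : 𝒢, (Q v).length := by
          exact Finset.sum_congr rfl fun v _ => sum_count_eq_length _
      _ ≤ ∑ _v : 𝒢, (G.diam + 1) := Finset.sum_le_sum fun v _ => hQlen v
      _ = (G.diam + 1) * Fintype.card 𝒢 := by simp [mul_comm]
end

section
/- The minimum, over all all-pairs sets of paths 𝒫 in Q_n, of the vertex congestion of 𝒫 equals 2^{n−1}·(n+2). In particular, there exists an all-pairs set of paths in Q_n with vertex congestion exactly 2^{n−1}·(n+2), and every all-pairs set of paths in Q_n has vertex congestion at least 2^{n−1}·(n+2). -/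
set_option maxHeartbeats 1000000


section
variable {n : ℕ}

/-- sorted list of coordinates where u,v differ -/
def diffs (u v : Fin n → Bool) : List (Fin n) :=
  Finset.sort (Finset.univ.filter fun i => u i ≠ v i) (· ≤ ·)

lemma mem_diffs {u v : Fin n → Bool} {i : Fin n} : i ∈ diffs u v ↔ u i ≠ v i := by
  simp [diffs]

lemma diffs_sorted (u v : Fin n → Bool) : (diffs u v).Pairwise (· < ·) :=
  (Finset.sortedLT_sort _).pairwise

lemma length_diffs (u v : Fin n → Bool) :
    (diffs u v).length = (Finset.univ.filter fun i => u i ≠ v i).card :=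
  Finset.length_sort _

/-- hybrid vertex: first k differing coordinates from v, rest from u -/
def hyb (u v : Fin n → Bool) (k : ℕ) : Fin n → Bool :=
  fun i => if i ∈ (diffs u v).take k then v i else u i

def pth (u v : Fin n → Bool) : List (Fin n → Bool) :=
  (List.range ((diffs u v).length + 1)).map (hyb u v)

lemma hyb_zero (u v : Fin n → Bool) : hyb u v 0 = u := by
  funext i; simp [hyb]

lemma hyb_len (u v : Fin n → Bool) : hyb u v (diffs u v).length = v := by
  funext i
  simp only [hyb, List.take_length]
  by_cases h : u i = v i
  · split <;> simp [h]
  · simp [mem_diffs.2 h]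

lemma getElem_not_mem_take {u v : Fin n → Bool} {k : ℕ} (hk : k < (diffs u v).length) :
    (diffs u v)[k] ∉ (diffs u v).take k := by
  intro hmem
  rw [List.mem_take_iff_getElem] at hmem
  obtain ⟨i, hi, hEq⟩ := hmem
  have hik : i < k := lt_of_lt_of_le hi inf_le_left
  have := (diffs_sorted u v).rel_get_of_lt
    (a := ⟨i, lt_trans hik hk⟩) (b := ⟨k, hk⟩) hik
  simp only [List.get_eq_getElem] at this
  rw [hEq] at this
  exact lt_irrefl _ this

lemma getElem_mem_take {u v : Fin n → Bool} {k m : ℕ} (hk : k < (diffs u v).length)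
    (hkm : k < m) : (diffs u v)[k] ∈ (diffs u v).take m := by
  rw [List.mem_take_iff_getElem]
  exact ⟨k, lt_inf_iff.2 ⟨hkm, hk⟩, rfl⟩

lemma hyb_ne {u v : Fin n → Bool} {k m : ℕ} (hk : k < (diffs u v).length)
    (hm : m ≤ (diffs u v).length) (hkm : k < m) : hyb u v k ≠ hyb u v m := by
  intro h
  set j := (diffs u v)[k] with hj
  have h1 : hyb u v k j = u j := by
    simp [hyb, hj, getElem_not_mem_take hk]
  have h2 : hyb u v m j = v j := by
    simp only [hyb]
    rw [if_pos]
    rcases lt_or_eq_of_le hm with hm' | hm'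
    · exact getElem_mem_take hk hkm
    · rw [hm', List.take_length]; exact List.getElem_mem _
  have : u j ≠ v j := mem_diffs.1 (List.getElem_mem _)
  rw [h, h2] at h1
  exact this h1.symm

lemma pth_head (u v : Fin n → Bool) : (pth u v).head? = some u := by
  rw [pth, List.range_succ_eq_map]
  simp [hyb_zero]

lemma pth_last (u v : Fin n → Bool) : (pth u v).getLast? = some v := by
  rw [pth, List.getLast?_map, List.range_succ, List.getLast?_concat]
  simp [hyb_len]

lemma pth_nodup (u v : Fin n → Bool) : (pth u v).Nodup := by
  refine List.Nodup.map_on ?_ List.nodup_range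
  intro k hk m hm h
  rw [List.mem_range, Nat.lt_succ_iff] at hk hm
  rcases lt_trichotomy k m with h' | h' | h'
  · exact absurd h (hyb_ne (lt_of_lt_of_le h' hm) hm h')
  · exact h'
  · exact absurd h.symm (hyb_ne (lt_of_lt_of_le h' hk) hk h')

lemma pth_self (u : Fin n → Bool) : pth u u = [u] := by
  have hd : diffs u u = [] := by
    rw [diffs]
    have : (Finset.univ.filter fun i => u i ≠ u i) = (∅ : Finset (Fin n)) := by
      simp
    rw [this, Finset.sort_empty]
  rw [pth, hd]
  show List.map (hyb u u) [0] = [u]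
  simp [hyb_zero]

lemma length_pth (u v : Fin n → Bool) : (pth u v).length = (diffs u v).length + 1 := by
  simp [pth]

lemma pth_chain (Q : SimpleGraph (Fin n → Bool))
    (hQ : ∀ u v, Q.Adj u v ↔ (Finset.univ.filter fun i => u i ≠ v i).card = 1)
    (u v : Fin n → Bool) : (pth u v).Chain' Q.Adj := by
  rw [pth, List.Chain', List.isChain_map, List.isChain_range_succ]
  intro k hk
  rw [hQ]
  set j := (diffs u v)[k] with hj
  have hfil : (Finset.univ.filter fun i => hyb u v k i ≠ hyb u v (k+1) i) = {j} := by
    ext i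
    simp only [Finset.mem_filter, Finset.mem_univ, true_and, Finset.mem_singleton]
    constructor
    · intro hne
      by_contra hij
      apply hne
      have : i ∈ (diffs u v).take (k+1) ↔ i ∈ (diffs u v).take k := by
        rw [List.take_succ]
        simp only [List.mem_append]
        constructor
        · rintro (h | h)
          · exact h
          · exfalso; apply hij
            rw [List.getElem?_eq_getElem hk] at h
            simpa using h
        · exact Or.inl
      simp only [hyb, this]
    · rintro rfl
      have h1 : hyb u v k j = u j := by simp [hyb, hj, getElem_not_mem_take hk]
      have h2 : hyb u v (k+1) j = v j := by
        simp only [hyb]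
        rw [if_pos (getElem_mem_take hk (Nat.lt_succ_self k))]
      rw [h1, h2]
      exact mem_diffs.1 (List.getElem_mem _)
  rw [hfil, Finset.card_singleton]

/-- pointwise xor -/
def xr (u t : Fin n → Bool) : Fin n → Bool := fun i => xor (u i) (t i)

lemma xr_xr (u t : Fin n → Bool) : xr (xr u t) t = u := by
  funext i; simp [xr]

lemma xr_inj (t : Fin n → Bool) : Function.Injective (fun u => xr u t) :=
  Function.LeftInverse.injective (g := fun u => xr u t) (fun u => xr_xr u t)

lemma diffs_xr (u v t : Fin n → Bool) : diffs (xr u t) (xr v t) = diffs u v := by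
  unfold diffs
  congr 1
  ext i
  simp only [Finset.mem_filter, Finset.mem_univ, true_and, xr]
  cases h1 : u i <;> cases h2 : v i <;> cases t i <;> simp [h1, h2]

lemma hyb_xr (u v t : Fin n → Bool) (k : ℕ) :
    hyb (xr u t) (xr v t) k = xr (hyb u v k) t := by
  funext i
  simp only [hyb, diffs_xr, xr]
  split <;> rfl

lemma pth_xr (u v t : Fin n → Bool) :
    pth (xr u t) (xr v t) = (pth u v).map (fun w => xr w t) := by
  rw [pth, pth, diffs_xr, List.map_map]
  exact List.map_congr_left (fun k _ => hyb_xr u v t k)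

lemma sum_count_length {α : Type*} [Fintype α] [DecidableEq α] (l : List α) :
    ∑ x : α, l.count x = l.length := by
  rw [← List.sum_toFinset_count_eq_length]
  symm
  apply Finset.sum_subset (Finset.subset_univ _)
  intro x _ hx
  simp only [List.mem_toFinset] at hx
  exact List.count_eq_zero_of_not_mem hx


lemma card_ne (hn : 1 ≤ n) (i : Fin n) (b : Bool) :
    (Finset.univ.filter fun v : Fin n → Bool => v i ≠ b).card = 2 ^ (n - 1) := by
  have key : (Finset.univ.filter fun v : Fin n → Bool => v i ≠ b).card
      = (Finset.univ.filter fun v : Fin n → Bool => ¬ v i ≠ b).card := by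
    refine Finset.card_bij' (fun v _ => Function.update v i (!(v i)))
      (fun v _ => Function.update v i (!(v i))) ?_ ?_ ?_ ?_
    · intro v hv
      simp only [Finset.mem_filter, Finset.mem_univ, true_and] at hv ⊢
      simp only [Function.update_self]
      revert hv; cases v i <;> cases b <;> simp
    · intro v hv
      simp only [Finset.mem_filter, Finset.mem_univ, true_and] at hv ⊢
      simp only [Function.update_self]
      revert hv; cases v i <;> cases b <;> simp
    · intro v _
      funext j
      by_cases hj : j = i
      · subst hj; simp
      · simp [Function.update_of_ne hj]
    · intro v _
      funext j
      by_cases hj : j = i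
      · subst hj; simp
      · simp [Function.update_of_ne hj]
  have hsum := Finset.card_filter_add_card_filter_not
    (s := (Finset.univ : Finset (Fin n → Bool))) (p := fun v => v i ≠ b)
  rw [← key] at hsum
  have hcard : (Finset.univ : Finset (Fin n → Bool)).card = 2 ^ n := by
    simp [Fintype.card_fun]
  rw [hcard] at hsum
  have h2 : 2 ^ n = 2 * 2 ^ (n - 1) := by
    conv_lhs => rw [show n = (n - 1) + 1 from (Nat.succ_pred_eq_of_pos hn).symm]
    ring
  generalize ha : (Finset.univ.filter fun v : Fin n → Bool => v i ≠ b).card = a at hsum ⊢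
  generalize (2:ℕ) ^ (n-1) = c at h2 ⊢
  generalize (2:ℕ) ^ n = d at h2 hsum
  clear key ha
  omega


lemma sum_hd (hn : 1 ≤ n) :
    ∑ u : Fin n → Bool, ∑ v : Fin n → Bool,
      ((Finset.univ.filter fun i => u i ≠ v i).card + 1)
    = 2 ^ n * (2 ^ (n - 1) * (n + 2)) := by
  have hcard : (Finset.univ : Finset (Fin n → Bool)).card = 2 ^ n := by
    simp [Fintype.card_fun]
  have inner : ∀ u : Fin n → Bool,
      ∑ v : Fin n → Bool, (Finset.univ.filter fun i => u i ≠ v i).card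
        = n * 2 ^ (n - 1) := by
    intro u
    have : ∀ v : Fin n → Bool, (Finset.univ.filter fun i => u i ≠ v i).card
        = ∑ i : Fin n, if u i ≠ v i then 1 else 0 := fun v => Finset.card_filter _ _
    simp_rw [this]
    rw [Finset.sum_comm]
    have : ∀ i : Fin n, (∑ v : Fin n → Bool, if u i ≠ v i then 1 else 0)
        = 2 ^ (n - 1) := by
      intro i
      rw [← Finset.card_filter]
      rw [show (Finset.univ.filter fun v : Fin n → Bool => u i ≠ v i)
          = (Finset.univ.filter fun v : Fin n → Bool => v i ≠ u i) from by
        apply Finset.filter_congr; intro v _; simp [ne_comm]]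
      exact card_ne hn i (u i)
    simp_rw [this]
    simp [mul_comm]
  have step : ∀ u : Fin n → Bool,
      ∑ v : Fin n → Bool, ((Finset.univ.filter fun i => u i ≠ v i).card + 1)
        = n * 2 ^ (n - 1) + 2 ^ n := by
    intro u
    rw [Finset.sum_add_distrib, inner u]
    simp [hcard]
  simp_rw [step]
  rw [Finset.sum_const, hcard, smul_eq_mul]
  obtain ⟨m, rfl⟩ : ∃ m, n = m + 1 := ⟨n - 1, (Nat.succ_pred_eq_of_pos hn).symm⟩
  simp only [Nat.add_sub_cancel]
  ring

lemma hd_triangle (u b v : Fin n → Bool) :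
    (Finset.univ.filter fun i => u i ≠ v i).card
      ≤ (Finset.univ.filter fun i => u i ≠ b i).card
        + (Finset.univ.filter fun i => b i ≠ v i).card := by
  calc (Finset.univ.filter fun i => u i ≠ v i).card
      ≤ ((Finset.univ.filter fun i => u i ≠ b i)
          ∪ (Finset.univ.filter fun i => b i ≠ v i)).card := by
        apply Finset.card_le_card
        intro i hi
        simp only [Finset.mem_filter, Finset.mem_univ, true_and, Finset.mem_union] at hi ⊢
        by_cases h : u i = b i
        · right; rw [← h]; exact hi
        · left; exact h
    _ ≤ _ := Finset.card_union_le _ _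

lemma len_ge (Q : SimpleGraph (Fin n → Bool))
    (hQ : ∀ u v, Q.Adj u v ↔ (Finset.univ.filter fun i => u i ≠ v i).card = 1) :
    ∀ (l : List (Fin n → Bool)) (u v : Fin n → Bool), l.Chain' Q.Adj →
      l.head? = some u → l.getLast? = some v →
      (Finset.univ.filter fun i => u i ≠ v i).card + 1 ≤ l.length
  | [], u, v, _, h, _ => by simp at h
  | [a], u, v, _, hh, hl => by
      simp only [List.head?_cons, Option.some.injEq] at hh
      simp only [List.getLast?_singleton, Option.some.injEq] at hl
      subst hh; subst hl
      simp
  | a :: b :: rest, u, v, hc, hh, hl => by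
      simp only [List.head?_cons, Option.some.injEq] at hh
      obtain rfl : u = a := hh.symm
      rw [List.Chain', List.isChain_cons_cons] at hc
      have hadj := (hQ u b).1 hc.1
      have hl' : (b :: rest).getLast? = some v := by
        rwa [List.getLast?_cons_cons] at hl
      have ih := len_ge Q hQ (b :: rest) b v hc.2 rfl hl'
      have tri := hd_triangle u b v
      rw [hadj] at tri
      simp only [List.length_cons] at ih ⊢
      omega



section
variable {n : ℕ}


lemma L_uniform (hn : 1 ≤ n) (w w' : Fin n → Bool) :
    (∑ u : Fin n → Bool, ∑ v : Fin n → Bool, (pth u v).count w)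
      = ∑ u : Fin n → Bool, ∑ v : Fin n → Bool, (pth u v).count w' := by
  set t : Fin n → Bool := fun i => xor (w i) (w' i) with ht
  have hw' : xr w t = w' := by
    funext i; simp only [xr, ht]; cases w i <;> cases w' i <;> rfl
  rw [← hw']
  refine Fintype.sum_equiv
    ⟨fun u => xr u t, fun u => xr u t, fun u => xr_xr u t, fun u => xr_xr u t⟩ _ _ ?_
  intro u
  refine Fintype.sum_equiv
    ⟨fun u => xr u t, fun u => xr u t, fun u => xr_xr u t, fun u => xr_xr u t⟩ _ _ ?_
  intro v
  show (pth u v).count w = (pth (xr u t) (xr v t)).count (xr w t)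
  rw [pth_xr, List.count_map_of_injective _ _ (xr_inj t)]

lemma L_total (hn : 1 ≤ n) :
    ∑ w : Fin n → Bool, ∑ u : Fin n → Bool, ∑ v : Fin n → Bool, (pth u v).count w
      = 2 ^ n * (2 ^ (n - 1) * (n + 2)) := by
  rw [Finset.sum_comm]
  have : ∀ u : Fin n → Bool,
      (∑ w : Fin n → Bool, ∑ v : Fin n → Bool, (pth u v).count w)
        = ∑ v : Fin n → Bool, ((Finset.univ.filter fun i => u i ≠ v i).card + 1) := by
    intro u
    rw [Finset.sum_comm]
    refine Finset.sum_congr rfl fun v _ => ?_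
    rw [sum_count_length, length_pth, length_diffs]
  simp_rw [this]
  exact sum_hd hn

lemma L_const (hn : 1 ≤ n) (w : Fin n → Bool) :
    (∑ u : Fin n → Bool, ∑ v : Fin n → Bool, (pth u v).count w)
      = 2 ^ (n - 1) * (n + 2) := by
  have hpos : 0 < 2 ^ n := Nat.pow_pos (by norm_num)
  have htot := L_total hn (n := n)
  have huni : ∀ w' : Fin n → Bool,
      (∑ u : Fin n → Bool, ∑ v : Fin n → Bool, (pth u v).count w')
        = ∑ u : Fin n → Bool, ∑ v : Fin n → Bool, (pth u v).count w :=
    fun w' => L_uniform hn w' w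
  rw [Finset.sum_congr rfl (fun w' _ => huni w'), Finset.sum_const] at htot
  have hcard : (Finset.univ : Finset (Fin n → Bool)).card = 2 ^ n := by
    simp [Fintype.card_fun]
  rw [hcard, smul_eq_mul] at htot
  exact Nat.eq_of_mul_eq_mul_left hpos htot

end

/-- The minimum, over all all-pairs sets of paths `𝒫` in the Boolean
hypercube `Q_n`, of the vertex congestion of `𝒫` equals `2^{n−1} · (n + 2)`.  In
particular, there exists an all-pairs set of paths in `Q_n` with vertex congestion
exactly `2^{n−1} · (n + 2)`, and every all-pairs set of paths in `Q_n` has vertex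
congestion at least `2^{n−1} · (n + 2)`. -/
theorem stmt18 (n : ℕ) (hn : 1 ≤ n) (Q : SimpleGraph (Fin n → Bool))
    (hQ : ∀ u v, Q.Adj u v ↔ (Finset.univ.filter fun i => u i ≠ v i).card = 1) :
    IsLeast
      {g : ℕ | ∃ P : (Fin n → Bool) → (Fin n → Bool) → List (Fin n → Bool),
        (∀ u v, (P u v).head? = some u) ∧
        (∀ u v, (P u v).getLast? = some v) ∧
        (∀ u v, (P u v).Chain' Q.Adj) ∧
        (∀ u v, (P u v).Nodup) ∧
        (∀ u, P u u = [u]) ∧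
        g = Finset.univ.sup
          (fun w => ∑ u : Fin n → Bool, ∑ v : Fin n → Bool, (P u v).count w)}
      (2 ^ (n - 1) * (n + 2)) := by
  have hcard : (Finset.univ : Finset (Fin n → Bool)).card = 2 ^ n := by
    simp [Fintype.card_fun]
  have hpos : 0 < 2 ^ n := Nat.pow_pos (by norm_num)
  constructor
  · refine ⟨pth, pth_head, pth_last, pth_chain Q hQ, pth_nodup, pth_self, ?_⟩
    have hsup : Finset.univ.sup
        (fun w => ∑ u : Fin n → Bool, ∑ v : Fin n → Bool, (pth u v).count w)
          = 2 ^ (n - 1) * (n + 2) := by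
      apply le_antisymm
      · exact Finset.sup_le fun w _ => le_of_eq (L_const hn w)
      · calc 2 ^ (n - 1) * (n + 2)
            = ∑ u : Fin n → Bool, ∑ v : Fin n → Bool,
                (pth u v).count (fun _ => false) := (L_const hn _).symm
          _ ≤ _ := Finset.le_sup
                (f := fun w => ∑ u : Fin n → Bool, ∑ v : Fin n → Bool, (pth u v).count w)
                (Finset.mem_univ (fun _ => false))
    exact hsup.symm
  · rintro g ⟨P, h1, h2, h3, h4, -, hg⟩
    have hlen : ∀ u v : Fin n → Bool,
        (Finset.univ.filter fun i => u i ≠ v i).card + 1 ≤ (P u v).length :=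
      fun u v => len_ge Q hQ (P u v) u v (h3 u v) (h1 u v) (h2 u v)
    have key : 2 ^ n * (2 ^ (n - 1) * (n + 2)) ≤ 2 ^ n * g := by
      calc 2 ^ n * (2 ^ (n - 1) * (n + 2))
          = ∑ u : Fin n → Bool, ∑ v : Fin n → Bool,
              ((Finset.univ.filter fun i => u i ≠ v i).card + 1) := (sum_hd hn).symm
        _ ≤ ∑ u : Fin n → Bool, ∑ v : Fin n → Bool, (P u v).length := by
            exact Finset.sum_le_sum fun u _ => Finset.sum_le_sum fun v _ => hlen u v
        _ = ∑ u : Fin n → Bool, ∑ v : Fin n → Bool, ∑ w : Fin n → Bool,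
              (P u v).count w :=
            Finset.sum_congr rfl fun u _ => Finset.sum_congr rfl fun v _ =>
              (sum_count_length _).symm
        _ = ∑ u : Fin n → Bool, ∑ w : Fin n → Bool, ∑ v : Fin n → Bool,
              (P u v).count w :=
            Finset.sum_congr rfl fun u _ => Finset.sum_comm
        _ = ∑ w : Fin n → Bool, ∑ u : Fin n → Bool, ∑ v : Fin n → Bool,
              (P u v).count w := Finset.sum_comm
        _ ≤ (Finset.univ : Finset (Fin n → Bool)).card • g := by
            refine Finset.sum_le_card_nsmul _ _ _ fun w _ => ?_
            rw [hg]
            exact Finset.le_sup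
              (f := fun w => ∑ u : Fin n → Bool, ∑ v : Fin n → Bool, (P u v).count w)
              (Finset.mem_univ w)
        _ = 2 ^ n * g := by rw [hcard, smul_eq_mul]
    exact Nat.le_of_mul_le_mul_left key hpos

end
end

section
/- Assume c ≥ 1 and (2c+1)² ≤ m. Then for every good sequence x ∈ {1} × [m]^{2c}: Σ over good sequences y ∈ {1} × [m]^{2c} of m^{J(x,y)} ≥ (1/(2e))·(c+1)·m^{2c+1}, where e is Euler's number. -/
/-- `J(x,y)`: the maximum odd (1-based) index `j ∈ [2c+1]` such that
`(x_1, …, x_j) = (y_1, …, y_j)`. -/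
def Jodd {m c : ℕ} (x y : Fin (2 * c + 1) → Fin m) : ℕ :=
  ((Finset.Icc 1 (2 * c + 1)).filter fun j =>
    Odd j ∧ ∀ i : Fin (2 * c + 1), (i : ℕ) < j → x i = y i).sup id

lemma card_agree_ge (m c t : ℕ) (hnm : 2*c+1 ≤ m) (ht : t ≤ c)
    (x : Fin (2*c+1) → Fin m) (hxgood : Function.Injective x) :
    (m - 2*c)^(2*(c-t)) ≤
      (Finset.univ.filter (fun y : Fin (2*c+1) → Fin m =>
        Function.Injective y ∧ ∀ i : Fin (2*c+1), (i:ℕ) < 2*t+1 → x i = y i)).card := by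
  classical
  set j := 2*t+1 with hj
  have hjn : j ≤ 2*c+1 := by omega
  set p : Fin m → Prop := fun v => ∃ i : Fin (2*c+1), (i:ℕ) < j ∧ x i = v with hp
  have hcard_idx : Fintype.card {i : Fin (2*c+1) // j ≤ (i:ℕ)} = 2*(c-t) := by
    have hb : Function.Bijective (fun i : Fin (2*(c-t)) =>
        (⟨⟨j + (i:ℕ), by omega⟩, by simp⟩ : {i : Fin (2*c+1) // j ≤ (i:ℕ)})) := by
      constructor
      · intro a b hab
        have := congrArg (fun z : {i : Fin (2*c+1) // j ≤ (i:ℕ)} => ((z : {i : Fin (2*c+1) // j ≤ (i:ℕ)}).1 : ℕ)) hab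
        simp only at this
        exact Fin.ext (by omega)
      · rintro ⟨⟨v, hv⟩, hvj⟩
        simp only [Subtype.mk.injEq] at hvj ⊢
        exact ⟨⟨v - j, by omega⟩, by simp [Fin.ext_iff]; omega⟩
    rw [← Fintype.card_of_bijective hb, Fintype.card_fin]
  have hcard_lt : Fintype.card {i : Fin (2*c+1) // (i:ℕ) < j} = j := by
    have hb : Function.Bijective (fun i : Fin j =>
        (⟨⟨(i:ℕ), by omega⟩, i.2⟩ : {i : Fin (2*c+1) // (i:ℕ) < j})) := by
      constructor
      · intro a b hab
        have := congrArg (fun z : {i : Fin (2*c+1) // (i:ℕ) < j} => ((z.1 : Fin (2*c+1)) : ℕ)) hab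
        simp only at this
        exact Fin.ext this
      · rintro ⟨⟨v, hv⟩, hvj⟩
        exact ⟨⟨v, hvj⟩, rfl⟩
    rw [← Fintype.card_of_bijective hb, Fintype.card_fin]
  have hcard_pos : Fintype.card {v : Fin m // p v} = j := by
    have hb : Function.Bijective (fun i : {i : Fin (2*c+1) // (i:ℕ) < j} =>
        (⟨x i.1, ⟨i.1, i.2, rfl⟩⟩ : {v : Fin m // p v})) := by
      constructor
      · intro a b hab
        have := congrArg Subtype.val hab
        simp only at this
        exact Subtype.ext (hxgood this)
      · rintro ⟨v, ⟨i, hi, hxi⟩⟩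
        exact ⟨⟨i, hi⟩, Subtype.ext hxi⟩
    rw [← Fintype.card_of_bijective hb, hcard_lt]
  have hcard_val : Fintype.card {v : Fin m // ¬ p v} = m - j := by
    rw [Fintype.card_subtype_compl, hcard_pos, Fintype.card_fin]
  -- the injection from embeddings
  set S := (Finset.univ.filter (fun y : Fin (2*c+1) → Fin m =>
        Function.Injective y ∧ ∀ i : Fin (2*c+1), (i:ℕ) < j → x i = y i)) with hS
  let Φ : ({i : Fin (2*c+1) // j ≤ (i:ℕ)} ↪ {v : Fin m // ¬ p v}) → {y : Fin (2*c+1) → Fin m // y ∈ S} := fun e =>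
    ⟨fun i => if h : (i:ℕ) < j then x i else (e ⟨i, le_of_not_gt h⟩).1, by
      simp only [hS, Finset.mem_filter, Finset.mem_univ, true_and]
      constructor
      · intro i1 i2 h12
        simp only at h12
        by_cases h1 : (i1:ℕ) < j <;> by_cases h2 : (i2:ℕ) < j
        · rw [dif_pos h1, dif_pos h2] at h12; exact hxgood h12
        · rw [dif_pos h1, dif_neg h2] at h12
          exact absurd ⟨i1, h1, h12⟩ (e ⟨i2, le_of_not_gt h2⟩).2
        · rw [dif_neg h1, dif_pos h2] at h12
          exact absurd ⟨i2, h2, h12.symm⟩ (e ⟨i1, le_of_not_gt h1⟩).2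
        · rw [dif_neg h1, dif_neg h2] at h12
          have := e.injective (Subtype.ext h12)
          have := congrArg (fun z : {i : Fin (2*c+1) // j ≤ (i:ℕ)} => z.1) this
          simpa using this
      · intro i hi; rw [dif_pos hi]⟩
  have hΦ : Function.Injective Φ := by
    intro e1 e2 h
    apply Function.Embedding.ext
    intro a
    have hy := congrArg Subtype.val h
    have h2 := congrFun hy a.1
    simp only [Φ, dif_neg (not_lt.mpr a.2)] at h2
    exact Subtype.ext h2
  have hle : Fintype.card ({i : Fin (2*c+1) // j ≤ (i:ℕ)} ↪ {v : Fin m // ¬ p v}) ≤ S.card := by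
    rw [← Fintype.card_coe]
    exact Fintype.card_le_of_injective Φ hΦ
  refine le_trans ?_ hle
  rw [Fintype.card_embedding_eq, hcard_idx, hcard_val]
  calc (m - 2*c)^(2*(c-t)) = ((m - j) + 1 - (2*(c-t)))^(2*(c-t)) := by congr 1; omega
    _ ≤ (m - j).descFactorial (2*(c-t)) := Nat.pow_sub_le_descFactorial _ _


set_option maxHeartbeats 1000000 in
/-- Assume `c ≥ 1` and `(2c+1)² ≤ m`.  Then for every good sequence
`x ∈ {1} × [m]^{2c}`:
`Σ over good sequences y ∈ {1} × [m]^{2c} of m^{J(x,y)} ≥ (1/(2e)) · (c+1) · m^{2c+1}`. -/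
theorem stmt19 (m c : ℕ) (hm : 0 < m) (hc : 1 ≤ c) (hcm : (2 * c + 1) ^ 2 ≤ m)
    (x : Fin (2 * c + 1) → Fin m) (hx0 : x 0 = (⟨0, hm⟩ : Fin m))
    (hxgood : Function.Injective x) :
    (1 / (2 * Real.exp 1)) * ((c : ℝ) + 1) * (m : ℝ) ^ (2 * c + 1) ≤
      ∑ y ∈ Finset.univ.filter
          (fun y : Fin (2 * c + 1) → Fin m =>
            y 0 = (⟨0, hm⟩ : Fin m) ∧ Function.Injective y),
        (m : ℝ) ^ Jodd x y := by
  classical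
  have hm9 : 9 ≤ m := le_trans (by nlinarith) hcm
  have hM9 : (9:ℝ) ≤ (m:ℝ) := by exact_mod_cast hm9
  have hM0 : (0:ℝ) < (m:ℝ) := by positivity
  have hm1 : (1:ℝ) ≤ (m:ℝ) := by linarith
  set w : ℕ → ℝ := fun t => if t = 0 then (m:ℝ) else (m:ℝ)^(2*t+1) - (m:ℝ)^(2*t-1) with hw
  have hw_nonneg : ∀ t, 0 ≤ w t := by
    intro t
    by_cases h : t = 0
    · simp only [hw]; rw [if_pos h]; positivity
    · simp only [hw, if_neg h]
      have : (m:ℝ)^(2*t-1) ≤ (m:ℝ)^(2*t+1) := pow_le_pow_right₀ hm1 (by omega)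
      linarith
  have telescope : ∀ s, ∑ t ∈ Finset.range (s+1), w t = (m:ℝ)^(2*s+1) := by
    intro s
    induction s with
    | zero => simp [hw]
    | succ s ih =>
      rw [Finset.sum_range_succ, ih]
      have h1 : 2*(s+1)-1 = 2*s+1 := by omega
      have h2 : 2*(s+1)+1 = (2*s+1)+2 := by omega
      simp only [hw, if_neg (Nat.succ_ne_zero s), h1, h2]
      ring
  set G := Finset.univ.filter
          (fun y : Fin (2 * c + 1) → Fin m =>
            y 0 = (⟨0, hm⟩ : Fin m) ∧ Function.Injective y) with hG
  have hpoint : ∀ y ∈ G,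
      ∑ t ∈ Finset.range (c+1),
        (if (∀ i : Fin (2*c+1), (i:ℕ) < 2*t+1 → x i = y i) then w t else 0)
      = (m:ℝ) ^ Jodd x y := by
    intro y hy
    rw [hG, Finset.mem_filter] at hy
    obtain ⟨-, hy0, hyinj⟩ := hy
    set F := (Finset.Icc 1 (2*c+1)).filter
      (fun j => Odd j ∧ ∀ i : Fin (2*c+1), (i:ℕ) < j → x i = y i) with hF
    have h1mem : 1 ∈ F := by
      simp only [hF, Finset.mem_filter, Finset.mem_Icc]
      refine ⟨⟨le_refl 1, by omega⟩, odd_one, ?_⟩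
      intro i hi
      have hi0 : i = 0 := by
        apply Fin.ext
        simpa using hi
      rw [hi0, hx0, hy0]
    obtain ⟨J, hJmem, hJsup⟩ := Finset.exists_mem_eq_sup F ⟨1, h1mem⟩ (id : ℕ → ℕ)
    have hJodd : Jodd x y = J := hJsup
    rw [hF, Finset.mem_filter, Finset.mem_Icc] at hJmem
    obtain ⟨⟨hJ1, hJn⟩, hJo, hJagree⟩ := hJmem
    obtain ⟨s, hs0⟩ := hJo
    have hs : J = 2*s+1 := by omega
    have hsc : s ≤ c := by omega
    rw [hJodd, hs, ← telescope s]
    have hzero : ∀ u ∈ Finset.range (c+1), u ∉ Finset.range (s+1) →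
        (if (∀ i : Fin (2*c+1), (i:ℕ) < 2*u+1 → x i = y i) then w u else 0) = 0 := by
      intro u hu hus
      simp only [Finset.mem_range] at hu hus
      rw [if_neg]
      intro hcond
      have hmem : 2*u+1 ∈ F := by
        simp only [hF, Finset.mem_filter, Finset.mem_Icc]
        exact ⟨⟨by omega, by omega⟩, ⟨u, by omega⟩, hcond⟩
      have hle := Finset.le_sup (f := (id : ℕ → ℕ)) hmem
      rw [hJsup] at hle
      simp only [id] at hle
      omega
    rw [← Finset.sum_subset (Finset.range_subset_range.mpr (by omega : s+1 ≤ c+1)) hzero]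
    apply Finset.sum_congr rfl
    intro u hu
    rw [if_pos]
    intro i hi
    simp only [Finset.mem_range] at hu
    exact hJagree i (by omega)
  have hswap : ∑ y ∈ G, (m:ℝ)^(Jodd x y)
      = ∑ t ∈ Finset.range (c+1), w t *
        ((Finset.univ.filter (fun y : Fin (2*c+1) → Fin m =>
          Function.Injective y ∧ ∀ i : Fin (2*c+1), (i:ℕ) < 2*t+1 → x i = y i)).card : ℝ) := by
    rw [← Finset.sum_congr rfl hpoint]
    rw [Finset.sum_comm]
    apply Finset.sum_congr rfl
    intro t _
    rw [← Finset.sum_filter, Finset.sum_const, nsmul_eq_mul, mul_comm]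
    congr 2
    rw [hG, Finset.filter_filter]
    apply congrArg
    apply Finset.filter_congr
    intro y _
    constructor
    · rintro ⟨⟨hy0, hyinj⟩, hcond⟩
      exact ⟨hyinj, hcond⟩
    · rintro ⟨hyinj, hcond⟩
      have h0 : x 0 = y 0 := hcond 0 (by simp)
      exact ⟨⟨by rw [← h0, hx0], hyinj⟩, hcond⟩
  clear_value w G
  have hterm : ∀ t ∈ Finset.range (c+1),
      (1 / (2 * Real.exp 1)) * (m:ℝ)^(2*c+1)
        ≤ w t * ((Finset.univ.filter (fun y : Fin (2*c+1) → Fin m =>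
          Function.Injective y ∧ ∀ i : Fin (2*c+1), (i:ℕ) < 2*t+1 → x i = y i)).card : ℝ) := by
    intro t ht
    simp only [Finset.mem_range] at ht
    have htc : t ≤ c := by omega
    have hnm : 2*c+1 ≤ m := by nlinarith
    have hmain : (1 / (2 * Real.exp 1)) * (m:ℝ)^(2*c+1)
        ≤ w t * (((m - 2*c)^(2*(c-t)) : ℕ) : ℝ) := by
      have hsub : ((m - 2*c : ℕ) : ℝ) = (m:ℝ) - 2*c := by
        rw [Nat.cast_sub (by omega : 2*c ≤ m)]
        push_cast
        ring
      rw [Nat.cast_pow, hsub]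
      set M := (m:ℝ) with hMdef
      clear_value M
      have hc1 : (1:ℝ) ≤ (c:ℝ) := by exact_mod_cast hc
      have hMc : 4*(c:ℝ)^2 + 2*(c:ℝ) ≤ M := by
        have h2 : (((2*c+1)^2 : ℕ) : ℝ) ≤ M := by rw [hMdef]; exact_mod_cast hcm
        push_cast at h2
        nlinarith
      have ha0 : (0:ℝ) < M - 2*c := by nlinarith
      have hMne : M ≠ 0 := ne_of_gt hM0
      have hwlb : M^(2*t+1) * (1 - 1/M^2) ≤ w t := by
        by_cases h : t = 0
        · subst h
          have hw0 : w 0 = M := by simp [hw, hMdef]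
          rw [hw0]
          have h1 : M^(2*0+1) * (1 - 1/M^2) = M - 1/M := by
            field_simp
            ring
          rw [h1]
          have h2 : (0:ℝ) < 1/M := div_pos one_pos hM0
          linarith
        · have hwt : w t = M^(2*t+1) - M^(2*t-1) := by simp [hw, if_neg h, hMdef]
          rw [hwt]
          have he : 2*t+1 = (2*t-1)+2 := by omega
          rw [he]
          have h1 : M^((2*t-1)+2) * (1 - 1/M^2) = M^((2*t-1)+2) - M^(2*t-1) := by
            rw [pow_add]
            field_simp
          rw [h1]
      have hrat0 : (0:ℝ) ≤ (M - 2*c)/M := div_nonneg ha0.le hM0.le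
      have hrat1 : (M - 2*c)/M ≤ 1 := by
        rw [div_le_one hM0]
        nlinarith
      have hexp2 : Real.exp (-(2*(c:ℝ)/(M-2*c))) ≤ (M - 2*c)/M := by
        have h1 : 1 + 2*(c:ℝ)/(M-2*c) ≤ Real.exp (2*(c:ℝ)/(M-2*c)) := by
          have := Real.add_one_le_exp (2*(c:ℝ)/(M-2*c))
          linarith
        have h2 : M/(M-2*c) = 1 + 2*(c:ℝ)/(M-2*c) := by
          field_simp
          ring
        have h3 : M/(M-2*c) ≤ Real.exp (2*(c:ℝ)/(M-2*c)) := by rw [h2]; exact h1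
        have h4 : (0:ℝ) < M/(M-2*c) := div_pos hM0 ha0
        rw [Real.exp_neg]
        calc (Real.exp (2*(c:ℝ)/(M-2*c)))⁻¹ ≤ (M/(M-2*c))⁻¹ := inv_anti₀ h4 h3
          _ = (M-2*c)/M := by rw [inv_div]
      have hexp : Real.exp (-1) ≤ ((M - 2*c)/M)^(2*c) := by
        have h5 : Real.exp (-(2*(c:ℝ)/(M-2*c)))^(2*c) ≤ ((M - 2*c)/M)^(2*c) :=
          pow_le_pow_left₀ (Real.exp_nonneg _) hexp2 _
        have h6 : Real.exp (-(2*(c:ℝ)/(M-2*c)))^(2*c)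
            = Real.exp (((2*c : ℕ) : ℝ) * (-(2*(c:ℝ)/(M-2*c)))) :=
          (Real.exp_nat_mul _ _).symm
        have h7 : (-1 : ℝ) ≤ ((2*c : ℕ) : ℝ) * (-(2*(c:ℝ)/(M-2*c))) := by
          push_cast
          have h8 : 2*(c:ℝ) * (2*(c:ℝ)/(M-2*c)) = (4*(c:ℝ)^2)/(M-2*c) := by ring
          have h9 : (4*(c:ℝ)^2)/(M-2*c) ≤ 1 := by
            rw [div_le_one ha0]; nlinarith
          nlinarith [h8, h9]
        calc Real.exp (-1) ≤ Real.exp (((2*c : ℕ) : ℝ) * (-(2*(c:ℝ)/(M-2*c)))) :=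
              Real.exp_le_exp.mpr h7
          _ = Real.exp (-(2*(c:ℝ)/(M-2*c)))^(2*c) := by rw [h6]
          _ ≤ ((M - 2*c)/M)^(2*c) := h5
      have hratio : ((M - 2*c)/M)^(2*c) ≤ ((M - 2*c)/M)^(2*(c-t)) :=
        pow_le_pow_of_le_one hrat0 hrat1 (by omega)
      have hhalf : (1:ℝ)/2 ≤ 1 - 1/M^2 := by
        have : 1/M^2 ≤ 1/81 := by
          apply div_le_div_of_nonneg_left (by norm_num) (by norm_num)
          nlinarith
        linarith
      have hk : (2*t+1) + 2*(c-t) = 2*c+1 := by omega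
      have hMpow : M^(2*t+1) * M^(2*(c-t)) = M^(2*c+1) := by rw [← pow_add, hk]
      have hfact : (M - 2*c)^(2*(c-t)) = M^(2*(c-t)) * ((M-2*c)/M)^(2*(c-t)) := by
        rw [← mul_pow]
        congr 1
        field_simp
      have hestart : (1 / (2 * Real.exp 1)) * M^(2*c+1)
          = M^(2*c+1) * ((1/2) * Real.exp (-1)) := by
        rw [Real.exp_neg]
        have hE : Real.exp 1 ≠ 0 := (Real.exp_pos 1).ne'
        field_simp
      calc (1 / (2 * Real.exp 1)) * M^(2*c+1)
          = M^(2*c+1) * ((1/2) * Real.exp (-1)) := hestart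
        _ ≤ M^(2*c+1) * ((1 - 1/M^2) * ((M-2*c)/M)^(2*(c-t))) := by
            apply mul_le_mul_of_nonneg_left _ (pow_nonneg hM0.le _)
            exact mul_le_mul hhalf (le_trans hexp hratio) (Real.exp_nonneg _) (by linarith)
        _ = M^(2*t+1) * (1 - 1/M^2) * (M - 2*c)^(2*(c-t)) := by
            rw [hfact, ← hMpow]; ring
        _ ≤ w t * (M - 2*c)^(2*(c-t)) :=
            mul_le_mul_of_nonneg_right hwlb (pow_nonneg ha0.le _)
    have hcard := card_agree_ge m c t hnm htc x hxgood
    exact le_trans hmain (mul_le_mul_of_nonneg_left (Nat.cast_le.mpr hcard) (hw_nonneg t))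

  calc (1 / (2 * Real.exp 1)) * ((c : ℝ) + 1) * (m : ℝ) ^ (2 * c + 1)
      = ∑ _t ∈ Finset.range (c+1), (1 / (2 * Real.exp 1)) * (m:ℝ)^(2*c+1) := by
        rw [Finset.sum_const, Finset.card_range, nsmul_eq_mul]
        push_cast
        ring
    _ ≤ ∑ t ∈ Finset.range (c+1), w t *
        ((Finset.univ.filter (fun y : Fin (2*c+1) → Fin m =>
          Function.Injective y ∧ ∀ i : Fin (2*c+1), (i:ℕ) < 2*t+1 → x i = y i)).card : ℝ) :=
        Finset.sum_le_sum hterm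
    _ = ∑ y ∈ G, (m:ℝ)^(Jodd x y) := hswap.symm
end
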